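/- arXiv:2104.04419 — 2 statements merged into one kernel-verified Lean document; each statement's English description precedes it below -/
import Mathlib

section
/- For all positive definite density matrices ρ and σ on a finite-dimensional complex Hilbert space, the Belavkin–Staszewski entropy satisfies D̂(ρ‖σ) ≤ ‖σ⁻¹ρ − 1‖, where ‖·‖ is the operator norm and 1 is the identity operator. -/
open scoped Kronecker ComplexOrder

namespace QIT

variable {n : Type*} [Fintype n] [DecidableEq n]

/-- Operator norm of a matrix, i.e. the norm of the induced operator on Euclidean space. -/
noncomputable def opNorm (M : Matrix n n ℂ) : ℝ :=
  ‖Matrix.toEuclideanCLM (𝕜 := ℂ) M‖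

/-- Functional calculus for Hermitian matrices (junk value `0` on non-Hermitian inputs). -/
noncomputable def matCfc (f : ℝ → ℝ) (M : Matrix n n ℂ) : Matrix n n ℂ :=
  if hM : M.IsHermitian then
    (hM.eigenvectorUnitary : Matrix n n ℂ) *
      Matrix.diagonal (fun i => (f (hM.eigenvalues i) : ℂ)) *
      star (hM.eigenvectorUnitary : Matrix n n ℂ)
  else 0

/-- Matrix logarithm via the functional calculus. -/
noncomputable def mlog (M : Matrix n n ℂ) : Matrix n n ℂ := matCfc Real.log M

/-- Real powers of a matrix via the functional calculus. -/
noncomputable def mpow (M : Matrix n n ℂ) (q : ℝ) : Matrix n n ℂ :=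
  matCfc (fun x => x ^ q) M

/-- Umegaki relative entropy `D(ρ‖σ) = Tr[ρ (log ρ - log σ)]`. -/
noncomputable def relEntropy (ρ σ : Matrix n n ℂ) : ℝ :=
  (Matrix.trace (ρ * (mlog ρ - mlog σ))).re

/-- Belavkin-Staszewski relative entropy `D̂(ρ‖σ) = Tr[ρ log (ρ^{1/2} σ⁻¹ ρ^{1/2})]`. -/
noncomputable def bsEntropy (ρ σ : Matrix n n ℂ) : ℝ :=
  (Matrix.trace (ρ * mlog (mpow ρ (1/2) * σ⁻¹ * mpow ρ (1/2)))).re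

/-- `q`-geometric Rényi divergence
`D̂_q(ρ‖σ) = (q-1)⁻¹ log Tr[σ^{1/2} (σ^{-1/2} ρ σ^{-1/2})^q σ^{1/2}]`. -/
noncomputable def geomRenyi (q : ℝ) (ρ σ : Matrix n n ℂ) : ℝ :=
  (q - 1)⁻¹ *
    Real.log
      (Matrix.trace
        (mpow σ (1/2) * mpow (mpow σ (-(1/2)) * ρ * mpow σ (-(1/2))) q * mpow σ (1/2))).re

/-- Trace norm `‖M‖₁ = Tr ((M† M)^{1/2})`. -/
noncomputable def traceNorm (M : Matrix n n ℂ) : ℝ :=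
  (((Matrix.posSemidef_conjTranspose_mul_self M).1.eigenvectorUnitary : Matrix n n ℂ) *
      Matrix.diagonal (fun i => ((Real.sqrt
        ((Matrix.posSemidef_conjTranspose_mul_self M).1.eigenvalues i) : ℝ) : ℂ)) *
      star ((Matrix.posSemidef_conjTranspose_mul_self M).1.eigenvectorUnitary :
        Matrix n n ℂ)).trace.re

/-- Partial trace over the second tensor factor. -/
noncomputable def ptraceRight {a c : Type*} [Fintype a] [Fintype c]
    (M : Matrix (a × c) (a × c) ℂ) : Matrix a a ℂ :=
  fun i j => ∑ k, M (i, k) (j, k)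

/-- Partial trace over the first tensor factor. -/
noncomputable def ptraceLeft {a c : Type*} [Fintype a] [Fintype c]
    (M : Matrix (a × c) (a × c) ℂ) : Matrix c c ℂ :=
  fun i j => ∑ k, M (k, i) (k, j)

section Aux
open Matrix
open scoped InnerProductSpace
open scoped MatrixOrder

lemma matCfc_eq (f : ℝ → ℝ) {M : Matrix n n ℂ} (hM : M.IsHermitian) :
    matCfc f M = (hM.eigenvectorUnitary : Matrix n n ℂ) *
      Matrix.diagonal (fun i => (f (hM.eigenvalues i) : ℂ)) *
      star (hM.eigenvectorUnitary : Matrix n n ℂ) := dif_pos hM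

lemma matCfc_mul (f g : ℝ → ℝ) {M : Matrix n n ℂ} (hM : M.IsHermitian) :
    matCfc f M * matCfc g M = matCfc (fun x => f x * g x) M := by
  rw [matCfc_eq f hM, matCfc_eq g hM, matCfc_eq _ hM]
  set U : Matrix n n ℂ := (hM.eigenvectorUnitary : Matrix n n ℂ) with hUdef
  have hU : star U * U = 1 := Matrix.mem_unitaryGroup_iff'.mp hM.eigenvectorUnitary.2
  simp only [mul_assoc]
  rw [← mul_assoc (star U) U, hU, one_mul,
    ← mul_assoc (Matrix.diagonal _) (Matrix.diagonal _), Matrix.diagonal_mul_diagonal]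
  norm_cast

lemma matCfc_congr {f g : ℝ → ℝ} {M : Matrix n n ℂ} (hM : M.IsHermitian)
    (h : ∀ i, f (hM.eigenvalues i) = g (hM.eigenvalues i)) :
    matCfc f M = matCfc g M := by
  rw [matCfc_eq f hM, matCfc_eq g hM]
  have : (fun i => (f (hM.eigenvalues i) : ℂ)) = fun i => (g (hM.eigenvalues i) : ℂ) :=
    funext fun i => by rw [h i]
  rw [this]

lemma matCfc_id {M : Matrix n n ℂ} (hM : M.IsHermitian) :
    matCfc (fun x => x) M = M := by
  rw [matCfc_eq _ hM]
  exact hM.spectral_theorem.symm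

lemma matCfc_one {M : Matrix n n ℂ} (hM : M.IsHermitian) :
    matCfc (fun _ => (1:ℝ)) M = 1 := by
  rw [matCfc_eq _ hM]
  simp only [Complex.ofReal_one, Matrix.diagonal_one, mul_one]
  exact Matrix.mem_unitaryGroup_iff.mp hM.eigenvectorUnitary.2

lemma matCfc_sub (f g : ℝ → ℝ) {M : Matrix n n ℂ} (hM : M.IsHermitian) :
    matCfc f M - matCfc g M = matCfc (fun x => f x - g x) M := by
  rw [matCfc_eq f hM, matCfc_eq g hM, matCfc_eq _ hM]
  rw [← Matrix.sub_mul, ← Matrix.mul_sub, Matrix.diagonal_sub]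
  norm_cast

lemma matCfc_isHermitian (f : ℝ → ℝ) {M : Matrix n n ℂ} (hM : M.IsHermitian) :
    (matCfc f M).IsHermitian := by
  rw [matCfc_eq f hM, Matrix.star_eq_conjTranspose]
  exact Matrix.isHermitian_mul_mul_conjTranspose _
    (Matrix.isHermitian_diagonal_of_self_adjoint _
      (funext fun i => Complex.conj_ofReal _))

lemma matCfc_posSemidef (f : ℝ → ℝ) {M : Matrix n n ℂ} (hM : M.IsHermitian)
    (h : ∀ i, 0 ≤ f (hM.eigenvalues i)) : (matCfc f M).PosSemidef := by
  rw [matCfc_eq f hM, Matrix.star_eq_conjTranspose]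
  exact (Matrix.PosSemidef.diagonal fun i => Complex.zero_le_real.2 (h i)).mul_mul_conjTranspose_same _

lemma posDef_conjTranspose_mul_mul {A : Matrix n n ℂ} (hA : A.PosDef)
    (B : Matrix n n ℂ) (hB : IsUnit B) : (Bᴴ * A * B).PosDef := by
  exact hA.conjTranspose_mul_mul_same (Matrix.mulVec_injective_iff_isUnit.mpr hB)

lemma matCfc_posDef (f : ℝ → ℝ) {M : Matrix n n ℂ} (hM : M.PosDef)
    (h : ∀ i, 0 < f (hM.1.eigenvalues i)) : (matCfc f M).PosDef := by
  rw [matCfc_eq f hM.1, Matrix.star_eq_conjTranspose]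
  set U : Matrix n n ℂ := (hM.1.eigenvectorUnitary : Matrix n n ℂ) with hUdef
  have hd : (Matrix.diagonal fun i => (f (hM.1.eigenvalues i) : ℂ)).PosDef :=
    Matrix.PosDef.diagonal fun i => Complex.zero_lt_real.2 (h i)
  have hU : IsUnit (Uᴴ) := by
    apply (Matrix.isUnit_iff_isUnit_det _).2
    have h1 : Uᴴ * U = 1 := by
      rw [← Matrix.star_eq_conjTranspose]
      exact Matrix.mem_unitaryGroup_iff'.mp hM.1.eigenvectorUnitary.2
    have h2 := congrArg Matrix.det h1
    rw [Matrix.det_mul, Matrix.det_one] at h2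
    exact IsUnit.of_mul_eq_one _ h2
  have := posDef_conjTranspose_mul_mul hd (Uᴴ) hU
  rwa [Matrix.conjTranspose_conjTranspose] at this


lemma trace_psd_mul (A B : Matrix n n ℂ) (hA : A.PosSemidef) :
    Matrix.trace (A * B) =
      ∑ i, dotProduct (star (fun k => CFC.sqrt A k i)) (B *ᵥ fun k => CFC.sqrt A k i) := by
  set S := CFC.sqrt A with hSdef
  have hS : ∀ i j, S i j = star (S j i) := fun i j => by
    rw [← Matrix.conjTranspose_apply, (CFC.sqrt_nonneg A).posSemidef.1]
  have h1 : A * B = S * (S * B) := by rw [← mul_assoc, CFC.sqrt_mul_sqrt_self A hA.nonneg]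
  rw [h1, Matrix.trace_mul_comm, Matrix.trace]
  refine Finset.sum_congr rfl fun i _ => ?_
  simp only [Matrix.diag_apply, Matrix.mul_apply, dotProduct, Matrix.mulVec,
    Pi.star_apply, Finset.sum_mul, Finset.mul_sum]
  rw [Finset.sum_comm]
  refine Finset.sum_congr rfl fun j _ => Finset.sum_congr rfl fun k _ => ?_
  rw [hS i j]
  ring

lemma re_trace_mul_nonneg {A B : Matrix n n ℂ} (hA : A.PosSemidef) (hB : B.PosSemidef) :
    0 ≤ (Matrix.trace (A * B)).re := by
  rw [trace_psd_mul A B hA, Complex.re_sum]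
  refine Finset.sum_nonneg fun i _ => ?_
  have := hB.dotProduct_mulVec_nonneg (fun k => CFC.sqrt A k i)
  exact (Complex.nonneg_iff.mp this).1

lemma re_trace_mul_le {A : Matrix n n ℂ} (B : Matrix n n ℂ) (hA : A.PosSemidef) :
    (Matrix.trace (A * B)).re ≤ opNorm B * (Matrix.trace A).re := by
  set S := CFC.sqrt A with hSdef
  set T := Matrix.toEuclideanCLM (𝕜 := ℂ) B with hTdef
  set v : n → EuclideanSpace ℂ n := fun i => (WithLp.equiv 2 (n → ℂ)).symm (fun k => S k i)
    with hvdef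
  have hinner : ∀ (C : Matrix n n ℂ) (i : n),
      dotProduct (star (fun k => S k i)) (C *ᵥ fun k => S k i)
        = ⟪v i, Matrix.toEuclideanCLM (𝕜 := ℂ) C (v i)⟫_ℂ := by
    intro C i
    rw [hvdef]
    rw [dotProduct_comm]
    rfl
  have htrA : (Matrix.trace A).re = ∑ i, ‖v i‖ ^ 2 := by
    have h1 : Matrix.trace A = Matrix.trace (A * 1) := by rw [mul_one]
    rw [h1, trace_psd_mul A 1 hA, Complex.re_sum]
    refine Finset.sum_congr rfl fun i _ => ?_
    rw [hinner 1 i]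
    rw [_root_.map_one]
    simp only [ContinuousLinearMap.one_apply]
    rw [inner_self_eq_norm_sq_to_K]
    norm_cast
  rw [trace_psd_mul A B hA, Complex.re_sum, htrA, Finset.mul_sum]
  refine Finset.sum_le_sum fun i _ => ?_
  rw [hinner B i]
  calc (⟪v i, T (v i)⟫_ℂ).re ≤ ‖⟪v i, T (v i)⟫_ℂ‖ := Complex.re_le_norm _
    _ ≤ ‖v i‖ * ‖T (v i)‖ := norm_inner_le_norm _ _
    _ ≤ ‖v i‖ * (‖T‖ * ‖v i‖) :=
        mul_le_mul_of_nonneg_left (T.le_opNorm _) (norm_nonneg _)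
    _ = opNorm B * ‖v i‖ ^ 2 := by rw [opNorm, ← hTdef]; ring


end Aux

/-- For all positive definite density matrices `ρ`, `σ`, the
Belavkin-Staszewski entropy satisfies `D̂(ρ‖σ) ≤ ‖σ⁻¹ ρ - 1‖`. -/
theorem bsEntropy_le_opNorm {n : Type*} [Fintype n] [DecidableEq n]
    (ρ σ : Matrix n n ℂ) (hρ : ρ.PosDef) (hσ : σ.PosDef)
    (hρtr : ρ.trace = 1) (hσtr : σ.trace = 1) :
    bsEntropy ρ σ ≤ opNorm (σ⁻¹ * ρ - 1) := by
  unfold bsEntropy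
  have hρH := hρ.1
  set S := mpow ρ (1/2) with hSdef
  have hSH : S.IsHermitian := matCfc_isHermitian _ hρH
  have hS_pd : S.PosDef :=
    matCfc_posDef _ hρ fun i => Real.rpow_pos_of_pos (hρ.eigenvalues_pos i) _
  have hSS : S * S = ρ := by
    rw [hSdef, mpow, matCfc_mul _ _ hρH,
      matCfc_congr hρH (g := fun x => x) fun i => ?_, matCfc_id hρH]
    have hpos := hρ.eigenvalues_pos i
    have h12 : (1/2 : ℝ) + 1/2 = 1 := by norm_num
    rw [← Real.rpow_add hpos, h12, Real.rpow_one]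
  set X := S * σ⁻¹ * S with hXdef
  have hX_pd : X.PosDef := by
    have := posDef_conjTranspose_mul_mul hσ.inv S hS_pd.isUnit
    rwa [hSH.eq] at this
  have hXH : X.IsHermitian := hX_pd.1
  have hkey : (X - 1 - mlog X).PosSemidef := by
    have e1 : matCfc (fun x => x - (1:ℝ)) X = X - 1 := by
      rw [← matCfc_sub (fun x => x) (fun _ => 1) hXH, matCfc_id hXH, matCfc_one hXH]
    have e2 : matCfc (fun x => (x - 1) - Real.log x) X
        = matCfc (fun x => x - 1) X - matCfc Real.log X :=
      (matCfc_sub (fun x => x - 1) Real.log hXH).symm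
    have h1 : X - 1 - mlog X = matCfc (fun x => x - 1 - Real.log x) X := by
      rw [e2, e1, mlog]
    rw [h1]
    refine matCfc_posSemidef _ hXH fun i => ?_
    have hpos := hX_pd.eigenvalues_pos i
    have hlog := Real.log_le_sub_one_of_pos hpos
    linarith
  have hsub : Matrix.trace (ρ * (X - 1 - mlog X))
      = Matrix.trace (ρ * (X - 1)) - Matrix.trace (ρ * mlog X) := by
    rw [mul_sub, Matrix.trace_sub]
  have h3 := re_trace_mul_nonneg hρ.posSemidef hkey
  rw [hsub, Complex.sub_re] at h3
  have hSρS : S * ρ * S = ρ * ρ := by rw [← hSS]; simp only [mul_assoc]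
  have step2 : Matrix.trace (ρ * X) = Matrix.trace (ρ * (σ⁻¹ * ρ)) := by
    calc Matrix.trace (ρ * X) = Matrix.trace ((ρ * S * σ⁻¹) * S) := by
          rw [hXdef]; congr 1; simp only [mul_assoc]
      _ = Matrix.trace (S * (ρ * S * σ⁻¹)) := Matrix.trace_mul_comm _ _
      _ = Matrix.trace ((S * ρ * S) * σ⁻¹) := by congr 1; simp only [mul_assoc]
      _ = Matrix.trace ((ρ * ρ) * σ⁻¹) := by rw [hSρS]
      _ = Matrix.trace (σ⁻¹ * (ρ * ρ)) := Matrix.trace_mul_comm _ _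
      _ = Matrix.trace ((σ⁻¹ * ρ) * ρ) := by congr 1; simp only [mul_assoc]
      _ = Matrix.trace (ρ * (σ⁻¹ * ρ)) := Matrix.trace_mul_comm _ _
  have step2' : Matrix.trace (ρ * (X - 1)) = Matrix.trace (ρ * (σ⁻¹ * ρ - 1)) := by
    rw [mul_sub, mul_sub, mul_one, Matrix.trace_sub, Matrix.trace_sub, step2]
  have step3 : (Matrix.trace (ρ * (σ⁻¹ * ρ - 1))).re ≤ opNorm (σ⁻¹ * ρ - 1) := by
    have h := re_trace_mul_le (σ⁻¹ * ρ - 1) hρ.posSemidef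
    rw [hρtr] at h
    simpa using h
  have hre : (Matrix.trace (ρ * (X - 1))).re = (Matrix.trace (ρ * (σ⁻¹ * ρ - 1))).re := by
    rw [step2']
  linarith


end QIT
end

section
/- Let Φ be a local interaction on ℤ of range r and strength J with local dimension d, satisfying uniform clustering with decay function ε. Let A, B₁, B₂, B₃, C be adjacent finite intervals with |A|, |B₁| ≤ n, |B₂| ≥ ℓ and |B₃|, |C| ≤ m, and set B := B₁B₂B₃. Then for all observables Q_{AB₁} ∈ 𝔄_{AB₁} and Q_{B₃C} ∈ 𝔄_{B₃C} (viewed in 𝔄_{AB₁B₂B₃C}): ‖tr_B(ρ^B Q_{AB₁} Q_{B₃C}) − tr_B(ρ^B Q_{AB₁}) · tr_B(ρ^B Q_{B₃C})‖ ≤ d^{2n+2m} ‖Q_{AB₁}‖ ‖Q_{B₃C}‖ ε(ℓ). -/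
open Matrix
open scoped ComplexOrder

namespace SpinChain

variable (d : ℕ)

/-- Configurations of the spins in the finite region `Λ ⊂ ℤ`. -/
abbrev Cfg (Λ : Finset ℤ) : Type := (x : Λ) → Fin d

/-- The algebra of observables on the region `Λ`, i.e. linear operators on
`ℋ_Λ = ⊗_{x ∈ Λ} ℂ^d`. -/
abbrev Obs (Λ : Finset ℤ) : Type := Matrix (Cfg d Λ) (Cfg d Λ) ℂ

/-- Operator norm of an observable. -/
noncomputable def opNorm {Λ : Finset ℤ} (M : Obs d Λ) : ℝ :=
  ‖Matrix.toEuclideanCLM (𝕜 := ℂ) M‖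

/-- Trace norm `‖M‖₁ = Tr ((M†M)^{1/2})` of an observable. -/
noncomputable def traceNorm {Λ : Finset ℤ} (M : Obs d Λ) : ℝ :=
  (((Matrix.posSemidef_conjTranspose_mul_self M).1.eigenvectorUnitary.1 *
      diagonal (((↑) : ℝ → ℂ) ∘ Real.sqrt ∘ (Matrix.posSemidef_conjTranspose_mul_self M).1.eigenvalues) *
      (star (Matrix.posSemidef_conjTranspose_mul_self M).1.eigenvectorUnitary : Matrix (Cfg d Λ) (Cfg d Λ) ℂ)).trace).re

/-- Restriction of a configuration to a subregion. -/
def restrict {Λ' Λ : Finset ℤ} (h : Λ' ⊆ Λ) (f : Cfg d Λ) : Cfg d Λ' :=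
  fun x => f ⟨x.1, h x.2⟩

/-- The canonical embedding `𝔄_{Λ'} → 𝔄_Λ`, `R ↦ R ⊗ 1_{Λ ∖ Λ'}`. -/
def embed {Λ' Λ : Finset ℤ} (h : Λ' ⊆ Λ) (R : Obs d Λ') : Obs d Λ :=
  fun f g =>
    if ∀ x : Λ, x.1 ∉ Λ' → f x = g x then R (restrict d h f) (restrict d h g) else 0

/-- An observable `Q ∈ 𝔄_Λ` is supported in `Λ'` if it is the embedding of some
observable on `Λ'`. -/
def SupportedIn {Λ : Finset ℤ} (Λ' : Finset ℤ) (Q : Obs d Λ) : Prop :=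
  ∃ (h : Λ' ⊆ Λ) (R : Obs d Λ'), Q = embed d h R

/-- Operator-norm distance from `Q ∈ 𝔄_Λ` to the subalgebra of observables
supported in `Λ'`. -/
noncomputable def distSupp {Λ : Finset ℤ} (Λ' : Finset ℤ) (h : Λ' ⊆ Λ) (Q : Obs d Λ) : ℝ :=
  sInf {x : ℝ | ∃ R : Obs d Λ', x = opNorm d (Q - embed d h R)}

/-- The extended partial trace `tr_{Λ'} : 𝔄_Λ → 𝔄_Λ`, determined by
`tr_{Λ'}(R ⊗ S) = Tr(R) (1_{Λ'} ⊗ S)`. -/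
noncomputable def ptr {Λ' Λ : Finset ℤ} (h : Λ' ⊆ Λ) (Q : Obs d Λ) : Obs d Λ :=
  fun f g =>
    if restrict d h f = restrict d h g then
      ∑ c : Cfg d Λ',
        Q (fun x => if hx : x.1 ∈ Λ' then c ⟨x.1, hx⟩ else f x)
          (fun x => if hx : x.1 ∈ Λ' then c ⟨x.1, hx⟩ else g x)
    else 0

/-- The (possibly complex time) Heisenberg evolution `Q ↦ e^{isH} Q e^{-isH}`. -/
noncomputable def timeEvol {Λ : Finset ℤ} (H : Obs d Λ) (s : ℂ) (Q : Obs d Λ) : Obs d Λ :=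
  NormedSpace.exp ((Complex.I * s) • H) * Q * NormedSpace.exp (-((Complex.I * s) • H))

/-- A local interaction of range `r` and strength `J` on the chain `ℤ`:
a family of self-adjoint observables `Φ_X ∈ 𝔄_X` with `‖Φ_X‖ ≤ J`, vanishing
whenever `diam X > r`. -/
structure Interaction (r : ℕ) (J : ℝ) where
  φ : (X : Finset ℤ) → Obs d X
  herm : ∀ X, (φ X).IsHermitian
  strength : ∀ X, opNorm d (φ X) ≤ J
  finiteRange : ∀ X : Finset ℤ, ∀ x ∈ X, ∀ y ∈ X, (r : ℤ) < |x - y| → φ X = 0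

variable {d}

/-- The local Hamiltonian `H_Λ = ∑_{X ⊆ Λ} Φ_X`, as an observable on the ambient
region `I ⊇ Λ`. -/
noncomputable def ham {r : ℕ} {J : ℝ} (Φ : Interaction d r J) {I : Finset ℤ}
    (Λ : Finset ℤ) (h : Λ ⊆ I) : Obs d I :=
  ∑ X ∈ Λ.powerset.attach, embed d ((Finset.mem_powerset.mp X.2).trans h) (Φ.φ X.1)

/-- The Gibbs state `ρ^Λ = e^{-H_Λ} / Tr(e^{-H_Λ}) ∈ 𝔄_Λ` (at inverse temperature `β = 1`,
absorbed in the interaction). -/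
noncomputable def gibbs {r : ℕ} {J : ℝ} (Φ : Interaction d r J) (Λ : Finset ℤ) : Obs d Λ :=
  (Matrix.trace (NormedSpace.exp (-(ham Φ Λ (le_refl Λ)))))⁻¹ •
    NormedSpace.exp (-(ham Φ Λ (le_refl Λ)))

/-- The expansional `E_{X,Y} = e^{-H_{X∪Y}} e^{H_X + H_Y}`, as an observable on the
ambient region `I`. -/
noncomputable def expans {r : ℕ} {J : ℝ} (Φ : Interaction d r J) {I : Finset ℤ}
    (X Y : Finset ℤ) (hX : X ⊆ I) (hY : Y ⊆ I) : Obs d I :=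
  NormedSpace.exp (-(ham Φ (X ∪ Y) (Finset.union_subset hX hY))) *
    NormedSpace.exp (ham Φ X hX + ham Φ Y hY)

/-- `tr_Λ(ρ^Λ Q)`, where `ρ^Λ` is the Gibbs state on `Λ` embedded in `𝔄_I`. -/
noncomputable def trGibbs {r : ℕ} {J : ℝ} (Φ : Interaction d r J) {I : Finset ℤ}
    {Λ : Finset ℤ} (h : Λ ⊆ I) (Q : Obs d I) : Obs d I :=
  ptr d h (embed d h (gibbs Φ Λ) * Q)

/-- The finite-volume Gibbs expectation value `ψ_Λ(Q) = Tr(ρ^Λ Q)`. -/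
noncomputable def expec {r : ℕ} {J : ℝ} (Φ : Interaction d r J) (Λ : Finset ℤ)
    (Q : Obs d Λ) : ℂ :=
  Matrix.trace (gibbs Φ Λ * Q)

/-- The interaction `Φ` satisfies *uniform clustering* with decay function `ε`:
for every finite interval `I = ABC` split into three adjacent subintervals with
`|B| ≥ ℓ`, the covariance correlation of the Gibbs state `ρ^I` between `A` and `C`
is at most `ε ℓ`. -/
def UniformClustering {r : ℕ} {J : ℝ} (Φ : Interaction d r J) (ε : ℕ → ℝ) : Prop :=
  ∀ (a b c e : ℤ) (hab : a ≤ b) (hbc : b ≤ c) (hce : c ≤ e) (ℓ : ℕ), (ℓ : ℤ) ≤ c - b →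
    ∀ (QA : Obs d (Finset.Ico a b)) (QC : Obs d (Finset.Ico c e)),
      opNorm d QA ≤ 1 → opNorm d QC ≤ 1 →
      ‖(expec Φ (Finset.Ico a e)
            (embed d (Finset.Ico_subset_Ico le_rfl (hbc.trans hce)) QA *
              embed d (Finset.Ico_subset_Ico (hab.trans hbc) le_rfl) QC) -
          expec Φ (Finset.Ico a e)
              (embed d (Finset.Ico_subset_Ico le_rfl (hbc.trans hce)) QA) *
            expec Φ (Finset.Ico a e)
              (embed d (Finset.Ico_subset_Ico (hab.trans hbc) le_rfl) QC))‖ ≤ ε ℓ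

set_option synthInstance.maxHeartbeats 1000000
set_option maxHeartbeats 4000000
/-! ### Auxiliary machinery -/

section Aux

variable {d : ℕ}

/-- Patch a configuration on `Λ` by a configuration on a subregion `Λ'`. -/
def patch {Λ' Λ : Finset ℤ} (c : Cfg d Λ') (f : Cfg d Λ) : Cfg d Λ :=
  fun x => if hx : x.1 ∈ Λ' then c ⟨x.1, hx⟩ else f x

@[simp] lemma restrict_patch {Λ' Λ : Finset ℤ} (h : Λ' ⊆ Λ) (c : Cfg d Λ') (f : Cfg d Λ) :
    restrict d h (patch c f) = c := by
  funext b
  simp [restrict, patch, b.2]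

@[simp] lemma patch_patch {Λ' Λ : Finset ℤ} (c c' : Cfg d Λ') (f : Cfg d Λ) :
    patch c (patch c' f) = patch c f := by
  funext x
  by_cases hx : x.1 ∈ Λ' <;> simp [patch, hx]

lemma patch_apply_mem {Λ' Λ : Finset ℤ} (c : Cfg d Λ') (f : Cfg d Λ) {x : Λ}
    (hx : x.1 ∈ Λ') : patch c f x = c ⟨x.1, hx⟩ := dif_pos hx

lemma patch_apply_not_mem {Λ' Λ : Finset ℤ} (c : Cfg d Λ') (f : Cfg d Λ) {x : Λ}
    (hx : x.1 ∉ Λ') : patch c f x = f x := dif_neg hx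

/-- Collapsing a sum over configurations which agree with `f` outside `Λ'`. -/
lemma sum_patch {M : Type*} [AddCommMonoid M] {Λ' Λ : Finset ℤ} (h : Λ' ⊆ Λ)
    (f : Cfg d Λ) (G : Cfg d Λ → M) :
    (∑ z : Cfg d Λ, if ∀ x : Λ, x.1 ∉ Λ' → f x = z x then G z else 0)
      = ∑ c : Cfg d Λ', G (patch c f) := by
  classical
  rw [← Finset.sum_filter]
  refine Finset.sum_nbij' (fun z => restrict d h z) (fun c => patch c f) ?_ ?_ ?_ ?_ ?_
  · intro a _; exact Finset.mem_univ _
  · intro c _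
    simp only [Finset.mem_filter, Finset.mem_univ, true_and]
    intro x hx
    exact (patch_apply_not_mem c f hx).symm
  · intro z hz
    simp only [Finset.mem_filter, Finset.mem_univ, true_and] at hz
    funext x
    by_cases hx : x.1 ∈ Λ'
    · simp [patch, hx, restrict]
    · simp [patch, hx, hz x hx]
  · intro c _; exact restrict_patch h c f
  · intro z hz
    simp only [Finset.mem_filter, Finset.mem_univ, true_and] at hz
    congr 1
    funext x
    by_cases hx : x.1 ∈ Λ'
    · simp [patch, hx, restrict]
    · simp [patch, hx, hz x hx]

end Aux
section Norms

variable {d : ℕ}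

lemma opNorm_nonneg {Λ : Finset ℤ} (M : Obs d Λ) : 0 ≤ opNorm d M := norm_nonneg _

@[simp] lemma opNorm_zero {Λ : Finset ℤ} : opNorm d (0 : Obs d Λ) = 0 := by
  unfold opNorm
  rw [map_zero, norm_zero]

lemma eq_zero_of_opNorm_eq_zero {Λ : Finset ℤ} {M : Obs d Λ} (h : opNorm d M = 0) :
    M = 0 := by
  have h2 : Matrix.toEuclideanCLM (𝕜 := ℂ) M = 0 := norm_eq_zero.mp h
  have := congrArg (Matrix.toEuclideanCLM (𝕜 := ℂ)).symm h2
  simpa using this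

lemma opNorm_smul {Λ : Finset ℤ} (s : ℂ) (M : Obs d Λ) :
    opNorm d (s • M) = ‖s‖ * opNorm d M := by
  unfold opNorm
  rw [_root_.map_smul]
  exact norm_smul s (Matrix.toEuclideanCLM (𝕜 := ℂ) M)

/-- A generic operator-norm bound via `mulVec`. -/
lemma clm_norm_le_of_mulVec {ι : Type*} [Fintype ι] [DecidableEq ι]
    (M : Matrix ι ι ℂ) (c : ℝ) (hc : 0 ≤ c)
    (H : ∀ v : ι → ℂ, ∑ i, ‖M.mulVec v i‖ ^ 2 ≤ c ^ 2 * ∑ i, ‖v i‖ ^ 2) :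
    ‖Matrix.toEuclideanCLM (𝕜 := ℂ) M‖ ≤ c := by
  refine ContinuousLinearMap.opNorm_le_bound _ hc fun x => ?_
  set v : ι → ℂ := WithLp.equiv 2 (ι → ℂ) x with hv
  have hx : x = (WithLp.equiv 2 (ι → ℂ)).symm v := rfl
  have happ : Matrix.toEuclideanCLM (𝕜 := ℂ) M x
      = (WithLp.equiv 2 (ι → ℂ)).symm (M.mulVec v) := by
    rw [hx, WithLp.equiv_symm_apply, Matrix.toEuclideanCLM_toLp]
  rw [happ]
  have h1 : ‖(WithLp.equiv 2 (ι → ℂ)).symm (M.mulVec v)‖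
      = Real.sqrt (∑ i, ‖M.mulVec v i‖ ^ 2) := by
    rw [EuclideanSpace.norm_eq]
    rfl
  have h2 : ‖x‖ = Real.sqrt (∑ i, ‖v i‖ ^ 2) := by
    rw [EuclideanSpace.norm_eq]
    rfl
  rw [h1, h2]
  have := Real.sqrt_le_sqrt (H v)
  refine this.trans (le_of_eq ?_)
  rw [Real.sqrt_mul (by positivity), Real.sqrt_sq hc]

lemma sum_sq_mulVec_le {ι : Type*} [Fintype ι] [DecidableEq ι]
    (M : Matrix ι ι ℂ) (v : ι → ℂ) :
    ∑ i, ‖M.mulVec v i‖ ^ 2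
      ≤ ‖Matrix.toEuclideanCLM (𝕜 := ℂ) M‖ ^ 2 * ∑ i, ‖v i‖ ^ 2 := by
  set x : EuclideanSpace ℂ ι := (WithLp.equiv 2 (ι → ℂ)).symm v with hx
  have happ : Matrix.toEuclideanCLM (𝕜 := ℂ) M x
      = (WithLp.equiv 2 (ι → ℂ)).symm (M.mulVec v) := by
    rw [hx, WithLp.equiv_symm_apply, Matrix.toEuclideanCLM_toLp]
  have h0 := (Matrix.toEuclideanCLM (𝕜 := ℂ) M).le_opNorm x
  rw [happ] at h0
  have h1 : ‖(WithLp.equiv 2 (ι → ℂ)).symm (M.mulVec v)‖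
      = Real.sqrt (∑ i, ‖M.mulVec v i‖ ^ 2) := by
    rw [EuclideanSpace.norm_eq]; rfl
  have h2 : ‖x‖ = Real.sqrt (∑ i, ‖v i‖ ^ 2) := by
    rw [EuclideanSpace.norm_eq]; rfl
  rw [h1, h2] at h0
  have hA : (0:ℝ) ≤ ∑ i, ‖M.mulVec v i‖ ^ 2 := by positivity
  have hB : (0:ℝ) ≤ ∑ i, ‖v i‖ ^ 2 := by positivity
  calc ∑ i, ‖M.mulVec v i‖ ^ 2
      = Real.sqrt (∑ i, ‖M.mulVec v i‖ ^ 2) ^ 2 := (Real.sq_sqrt hA).symm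
    _ ≤ (‖Matrix.toEuclideanCLM (𝕜 := ℂ) M‖ * Real.sqrt (∑ i, ‖v i‖ ^ 2)) ^ 2 := by
        have hnn : (0:ℝ) ≤ Real.sqrt (∑ i, ‖M.mulVec v i‖ ^ 2) := Real.sqrt_nonneg _
        exact pow_le_pow_left₀ hnn h0 2
    _ = ‖Matrix.toEuclideanCLM (𝕜 := ℂ) M‖ ^ 2 * ∑ i, ‖v i‖ ^ 2 := by
        rw [mul_pow, Real.sq_sqrt hB]

end Norms
section PartialBij

variable {d : ℕ}

/-- Operator-norm bound for a matrix whose nonzero entries form a partial bijection. -/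
lemma clm_norm_le_of_partial_bij {ι : Type*} [Fintype ι] [DecidableEq ι]
    (M : Matrix ι ι ℂ) (τ σ : ι → ι) (c : ℝ) (hc : 0 ≤ c)
    (hτ : ∀ f g, M f g ≠ 0 → g = τ f) (hσ : ∀ f g, M f g ≠ 0 → f = σ g)
    (hent : ∀ f g, ‖M f g‖ ≤ c) :
    ‖Matrix.toEuclideanCLM (𝕜 := ℂ) M‖ ≤ c := by
  classical
  refine clm_norm_le_of_mulVec M c hc fun v => ?_
  have hmv : ∀ f, M.mulVec v f = M f (τ f) * v (τ f) := by
    intro f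
    unfold Matrix.mulVec dotProduct
    refine Finset.sum_eq_single (τ f) ?_ ?_
    · intro g _ hg
      have : M f g = 0 := by
        by_contra hne
        exact hg (hτ f g hne)
      simp [this]
    · intro hf; exact absurd (Finset.mem_univ _) hf
  have step1 : ∑ f, ‖M.mulVec v f‖ ^ 2 = ∑ f, ‖M f (τ f) * v (τ f)‖ ^ 2 := by
    exact Finset.sum_congr rfl fun f _ => by rw [hmv f]
  set s : Finset ι := Finset.univ.filter (fun f => M f (τ f) ≠ 0) with hs
  have step2 : ∑ f, ‖M f (τ f) * v (τ f)‖ ^ 2 = ∑ f ∈ s, ‖M f (τ f) * v (τ f)‖ ^ 2 := by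
    refine (Finset.sum_subset (Finset.subset_univ s) ?_).symm
    intro f _ hf
    have : M f (τ f) = 0 := by
      by_contra hne
      exact hf (Finset.mem_filter.mpr ⟨Finset.mem_univ _, hne⟩)
    rw [this, zero_mul]
    simp
  have step3 : ∑ f ∈ s, ‖M f (τ f) * v (τ f)‖ ^ 2 ≤ c ^ 2 * ∑ f ∈ s, ‖v (τ f)‖ ^ 2 := by
    rw [Finset.mul_sum]
    refine Finset.sum_le_sum fun f _ => ?_
    rw [norm_mul, mul_pow]
    have h1 : ‖M f (τ f)‖ ≤ c := by
      exact hent f (τ f)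
    have h2 : ‖M f (τ f)‖ ^ 2 ≤ c ^ 2 := pow_le_pow_left₀ (norm_nonneg _) h1 2
    exact mul_le_mul_of_nonneg_right h2 (by positivity)
  have hinj : Set.InjOn τ s := by
    intro f hf f' hf' heq
    have hf0 : M f (τ f) ≠ 0 := (Finset.mem_filter.mp hf).2
    have hf0' : M f' (τ f') ≠ 0 := (Finset.mem_filter.mp hf').2
    have e1 : f = σ (τ f) := hσ f (τ f) hf0
    have e2 : f' = σ (τ f') := hσ f' (τ f') hf0'
    rw [e1, e2, heq]
  have step4 : ∑ f ∈ s, ‖v (τ f)‖ ^ 2 ≤ ∑ g, ‖v g‖ ^ 2 := by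
    have himg := Finset.sum_image (s := s) (g := τ) (f := fun g => ‖v g‖ ^ 2)
      (fun x hx y hy hxy => hinj hx hy hxy)
    rw [← himg]
    exact Finset.sum_le_sum_of_subset_of_nonneg (Finset.subset_univ _)
      (fun g _ _ => by positivity)
  calc ∑ f, ‖M.mulVec v f‖ ^ 2
      = ∑ f ∈ s, ‖M f (τ f) * v (τ f)‖ ^ 2 := by rw [step1, step2]
    _ ≤ c ^ 2 * ∑ f ∈ s, ‖v (τ f)‖ ^ 2 := step3
    _ ≤ c ^ 2 * ∑ g, ‖v g‖ ^ 2 := by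
        exact mul_le_mul_of_nonneg_left step4 (by positivity)

/-- Masking a matrix by fixing the configurations outside `Λ'`. -/
def mask {Λ' Λ : Finset ℤ} (h : Λ' ⊆ Λ) (u v : Cfg d Λ') (M : Obs d Λ) : Obs d Λ :=
  fun f g => if restrict d h f = u ∧ restrict d h g = v then M f g else 0

lemma sum_mask {Λ' Λ : Finset ℤ} (h : Λ' ⊆ Λ) (M : Obs d Λ) :
    ∑ u : Cfg d Λ', ∑ v : Cfg d Λ', mask h u v M = M := by
  classical
  funext f g
  rw [Matrix.sum_apply]
  have happ : ∀ u : Cfg d Λ', (∑ v : Cfg d Λ', mask h u v M) f g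
      = ∑ v : Cfg d Λ', mask h u v M f g := fun u => Matrix.sum_apply _ _ _ _
  rw [Finset.sum_congr rfl fun u _ => happ u]
  simp [mask, ite_and, Finset.sum_ite_eq]

end PartialBij
section BDiag

variable {d : ℕ}

/-- Norm bound for a matrix which is "diagonal in `Λ'`" with uniformly small entries. -/
lemma opNorm_le_of_bdiag {Λ' Λ : Finset ℤ} (h : Λ' ⊆ Λ) (M : Obs d Λ) (c : ℝ) (hc : 0 ≤ c)
    (hdiag : ∀ f g, restrict d h f ≠ restrict d h g → M f g = 0)
    (hent : ∀ f g, ‖M f g‖ ≤ c) :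
    opNorm d M ≤ (Fintype.card (Cfg d (Λ \ Λ')) : ℝ) ^ 2 * c := by
  classical
  have hc' : Λ \ Λ' ⊆ Λ := Finset.sdiff_subset
  have hsum := sum_mask (d := d) hc' M
  have key : ∀ u v : Cfg d (Λ \ Λ'),
      ‖Matrix.toEuclideanCLM (𝕜 := ℂ) (mask hc' u v M)‖ ≤ c := by
    intro u v
    set τ : Cfg d Λ → Cfg d Λ := fun f x =>
      if hx : x.1 ∈ Λ' then f x else v ⟨x.1, Finset.mem_sdiff.mpr ⟨x.2, hx⟩⟩ with hτdef
    set σ : Cfg d Λ → Cfg d Λ := fun g x =>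
      if hx : x.1 ∈ Λ' then g x else u ⟨x.1, Finset.mem_sdiff.mpr ⟨x.2, hx⟩⟩ with hσdef
    refine clm_norm_le_of_partial_bij _ τ σ c hc ?_ ?_ ?_
    · intro f g hne
      unfold mask at hne
      by_cases hcond : restrict d hc' f = u ∧ restrict d hc' g = v
      · have hM : M f g ≠ 0 := by
          rwa [if_pos hcond] at hne
        have hBeq : restrict d h f = restrict d h g := by
          by_contra hne2
          exact hM (hdiag f g hne2)
        funext x
        by_cases hx : x.1 ∈ Λ'
        · have h1 : f ⟨x.1, h hx⟩ = g ⟨x.1, h hx⟩ := congrFun hBeq ⟨x.1, hx⟩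
          simp only [hτdef, dif_pos hx]
          exact h1.symm
        · have h1 : g ⟨x.1, hc' (Finset.mem_sdiff.mpr ⟨x.2, hx⟩)⟩
              = v ⟨x.1, Finset.mem_sdiff.mpr ⟨x.2, hx⟩⟩ :=
            congrFun hcond.2 ⟨x.1, Finset.mem_sdiff.mpr ⟨x.2, hx⟩⟩
          simp only [hτdef, dif_neg hx]
          exact h1
      · exact absurd (if_neg hcond) hne
    · intro f g hne
      unfold mask at hne
      by_cases hcond : restrict d hc' f = u ∧ restrict d hc' g = v
      · have hM : M f g ≠ 0 := by
          rwa [if_pos hcond] at hne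
        have hBeq : restrict d h f = restrict d h g := by
          by_contra hne2
          exact hM (hdiag f g hne2)
        funext x
        by_cases hx : x.1 ∈ Λ'
        · have h1 : f ⟨x.1, h hx⟩ = g ⟨x.1, h hx⟩ := congrFun hBeq ⟨x.1, hx⟩
          simp only [hσdef, dif_pos hx]
          exact h1
        · have h1 : f ⟨x.1, hc' (Finset.mem_sdiff.mpr ⟨x.2, hx⟩)⟩
              = u ⟨x.1, Finset.mem_sdiff.mpr ⟨x.2, hx⟩⟩ :=
            congrFun hcond.1 ⟨x.1, Finset.mem_sdiff.mpr ⟨x.2, hx⟩⟩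
          simp only [hσdef, dif_neg hx]
          exact h1
      · exact absurd (if_neg hcond) hne
    · intro f g
      unfold mask
      by_cases hcond : restrict d hc' f = u ∧ restrict d hc' g = v
      · rw [if_pos hcond]; exact hent f g
      · rw [if_neg hcond]; simpa using hc
  have hnorm : opNorm d M
      ≤ ∑ u : Cfg d (Λ \ Λ'), ∑ v : Cfg d (Λ \ Λ'), c := by
    unfold opNorm
    rw [← hsum, map_sum]
    refine (norm_sum_le _ _).trans ?_
    refine Finset.sum_le_sum fun u _ => ?_
    rw [map_sum]
    refine (norm_sum_le _ _).trans ?_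
    exact Finset.sum_le_sum fun v _ => key u v
  refine hnorm.trans (le_of_eq ?_)
  simp [Finset.sum_const, Finset.card_univ, nsmul_eq_mul]
  ring

end BDiag

section Slice

variable {d : ℕ}

/-- The slice of an observable at fixed off-`Λ'` configurations. -/
def slice {Λ' Λ : Finset ℤ} (Q : Obs d Λ) (f g : Cfg d Λ) : Obs d Λ' :=
  fun b b' => Q (patch b f) (patch b' g)

lemma opNorm_slice_le {Λ' Λ : Finset ℤ} (h : Λ' ⊆ Λ) (Q : Obs d Λ) (f g : Cfg d Λ) :
    opNorm d (slice (Λ' := Λ') Q f g) ≤ opNorm d Q := by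
  classical
  refine clm_norm_le_of_mulVec _ _ (opNorm_nonneg Q) fun v => ?_
  set w : Cfg d Λ → ℂ := fun z =>
    if ∀ x : Λ, x.1 ∉ Λ' → g x = z x then v (restrict d h z) else 0 with hw
  have hwz : ∀ z : Cfg d Λ, w z
      = if ∀ x : Λ, x.1 ∉ Λ' → g x = z x then v (restrict d h z) else 0 := fun z => rfl
  have hmv : ∀ b : Cfg d Λ', (slice (Λ' := Λ') Q f g).mulVec v b
      = Q.mulVec w (patch b f) := by
    intro b
    unfold Matrix.mulVec dotProduct
    have : ∀ z : Cfg d Λ, Q (patch b f) z * w z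
        = if ∀ x : Λ, x.1 ∉ Λ' → g x = z x then Q (patch b f) z * v (restrict d h z)
          else 0 := by
      intro z
      rw [hwz z]
      by_cases hcond : ∀ x : Λ, x.1 ∉ Λ' → g x = z x
      · rw [if_pos hcond, if_pos hcond]
      · rw [if_neg hcond, if_neg hcond, mul_zero]
    rw [Finset.sum_congr rfl fun z _ => this z]
    rw [sum_patch h g]
    refine Finset.sum_congr rfl fun b' _ => ?_
    rw [restrict_patch]
    rfl
  have step1 : ∑ b : Cfg d Λ', ‖(slice (Λ' := Λ') Q f g).mulVec v b‖ ^ 2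
      = ∑ b : Cfg d Λ', ‖Q.mulVec w (patch b f)‖ ^ 2 :=
    Finset.sum_congr rfl fun b _ => by rw [hmv b]
  have hinj : Set.InjOn (fun b : Cfg d Λ' => patch b f)
      ↑(Finset.univ : Finset (Cfg d Λ')) := by
    intro b _ b' _ heq
    have := congrArg (restrict d h) heq
    rwa [restrict_patch, restrict_patch] at this
  have step2 : ∑ b : Cfg d Λ', ‖Q.mulVec w (patch b f)‖ ^ 2
      ≤ ∑ z : Cfg d Λ, ‖Q.mulVec w z‖ ^ 2 := by
    have himg := Finset.sum_image (s := (Finset.univ : Finset (Cfg d Λ')))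
      (g := fun b => patch b f) (f := fun z => ‖Q.mulVec w z‖ ^ 2)
      (fun x hx y hy hxy => hinj hx hy hxy)
    rw [← himg]
    exact Finset.sum_le_sum_of_subset_of_nonneg (Finset.subset_univ _)
      (fun z _ _ => by positivity)
  have step3 := sum_sq_mulVec_le Q w
  have step4 : ∑ z : Cfg d Λ, ‖w z‖ ^ 2 = ∑ b : Cfg d Λ', ‖v b‖ ^ 2 := by
    have : ∀ z : Cfg d Λ, ‖w z‖ ^ 2
        = if ∀ x : Λ, x.1 ∉ Λ' → g x = z x then ‖v (restrict d h z)‖ ^ 2 else 0 := by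
      intro z
      rw [hwz z]
      by_cases hcond : ∀ x : Λ, x.1 ∉ Λ' → g x = z x
      · rw [if_pos hcond, if_pos hcond]
      · rw [if_neg hcond, if_neg hcond, norm_zero]
        ring
    rw [Finset.sum_congr rfl fun z _ => this z, sum_patch h g]
    exact Finset.sum_congr rfl fun b _ => by rw [restrict_patch]
  calc ∑ b : Cfg d Λ', ‖(slice (Λ' := Λ') Q f g).mulVec v b‖ ^ 2
      ≤ ∑ z : Cfg d Λ, ‖Q.mulVec w z‖ ^ 2 := by rw [step1]; exact step2
    _ ≤ ‖Matrix.toEuclideanCLM (𝕜 := ℂ) Q‖ ^ 2 * ∑ z : Cfg d Λ, ‖w z‖ ^ 2 := step3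
    _ = opNorm d Q ^ 2 * ∑ b : Cfg d Λ', ‖v b‖ ^ 2 := by rw [step4]; rfl

end Slice
section EntryHelpers

variable {d : ℕ}

lemma ptr_apply_of_eq {Λ' Λ : Finset ℤ} (h : Λ' ⊆ Λ) (M : Obs d Λ) {f g : Cfg d Λ}
    (hfg : restrict d h f = restrict d h g) :
    ptr d h M f g = ∑ c : Cfg d Λ', M (patch c f) (patch c g) := by
  unfold ptr
  rw [if_pos hfg]
  rfl

lemma ptr_apply_of_ne {Λ' Λ : Finset ℤ} (h : Λ' ⊆ Λ) (M : Obs d Λ) {f g : Cfg d Λ}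
    (hfg : restrict d h f ≠ restrict d h g) :
    ptr d h M f g = 0 := by
  unfold ptr
  rw [if_neg hfg]

lemma trace_eq_sum {ι : Type*} [Fintype ι] (M : Matrix ι ι ℂ) :
    Matrix.trace M = ∑ c, M c c := rfl

lemma triple_mul_apply {ι : Type*} [Fintype ι] (X Y Z : Matrix ι ι ℂ) (a b : ι) :
    (X * Y * Z) a b = ∑ w, ∑ z, X a z * Y z w * Z w b := by
  simp only [Matrix.mul_apply, Finset.sum_mul]

lemma mul_ite_zero_mul (P : Prop) [Decidable P] (a t b : ℂ) :
    a * (if P then t else 0) * b = if P then a * t * b else 0 := by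
  split_ifs <;> ring

lemma mul_mul_ite_zero (P : Prop) [Decidable P] (a t b : ℂ) :
    a * b * (if P then t else 0) = if P then a * b * t else 0 := by
  split_ifs <;> ring

lemma ite_zero_mul' (P : Prop) [Decidable P] (t b : ℂ) :
    (if P then t else 0) * b = if P then t * b else 0 := by
  split_ifs <;> ring

lemma mul_ite_zero (P : Prop) [Decidable P] (a t : ℂ) :
    a * (if P then t else 0) = if P then a * t else 0 := by
  split_ifs <;> ring

end EntryHelpers
section Entry

variable {d : ℕ} {a₀ a₁ a₂ a₃ a₄ a₅ : ℤ}

lemma entry_triple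
    (h₀₁ : a₀ ≤ a₁) (h₁₂ : a₁ ≤ a₂) (h₂₃ : a₂ ≤ a₃) (h₃₄ : a₃ ≤ a₄) (h₄₅ : a₄ ≤ a₅)
    (hB : Finset.Ico a₁ a₄ ⊆ Finset.Ico a₀ a₅)
    (hP : Finset.Ico a₀ a₂ ⊆ Finset.Ico a₀ a₅)
    (hR : Finset.Ico a₃ a₅ ⊆ Finset.Ico a₀ a₅)
    (hB₁B : Finset.Ico a₁ a₂ ⊆ Finset.Ico a₁ a₄)
    (hB₃B : Finset.Ico a₃ a₄ ⊆ Finset.Ico a₁ a₄)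
    (ρ : Obs d (Finset.Ico a₁ a₄)) (Q₁ : Obs d (Finset.Ico a₀ a₂))
    (Q₂ : Obs d (Finset.Ico a₃ a₅)) (f g : Cfg d (Finset.Ico a₀ a₅))
    (hfg : restrict d hB f = restrict d hB g) :
    ptr d hB (embed d hB ρ * embed d hP Q₁ * embed d hR Q₂) f g
      = Matrix.trace (ρ
          * embed d hB₁B (slice (Λ' := Finset.Ico a₁ a₂) Q₁ (restrict d hP f) (restrict d hP g))
          * embed d hB₃B (slice (Λ' := Finset.Ico a₃ a₄) Q₂ (restrict d hR f) (restrict d hR g))) := by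
  classical
  have hB₂B : Finset.Ico a₂ a₃ ⊆ Finset.Ico a₁ a₄ :=
    Finset.Ico_subset_Ico (by omega) (by omega)
  -- the canonical middle expression
  have hlhs : ∀ c : Cfg d (Finset.Ico a₁ a₄),
      (embed d hB ρ * embed d hP Q₁ * embed d hR Q₂) (patch c f) (patch c g)
      = ∑ β : Cfg d (Finset.Ico a₁ a₄),
          ρ c β * (Q₁ (restrict d hP (patch β f)) (restrict d hP (patch c g)) *
            (if restrict d hB₂B β = restrict d hB₂B c then
              Q₂ (restrict d hR (patch β f)) (restrict d hR (patch c g)) else 0)) := by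
    intro c
    rw [triple_mul_apply, Finset.sum_comm]
    have step1 : ∀ z : Cfg d (Finset.Ico a₀ a₅),
        (∑ w, embed d hB ρ (patch c f) z * embed d hP Q₁ z w * embed d hR Q₂ w (patch c g))
        = if ∀ x : (Finset.Ico a₀ a₅ : Finset ℤ), x.1 ∉ Finset.Ico a₁ a₄ →
              (patch c f) x = z x then
            (∑ w, ρ c (restrict d hB z) *
              (embed d hP Q₁ z w * embed d hR Q₂ w (patch c g)))
          else 0 := by
      intro z
      by_cases hcond : ∀ x : (Finset.Ico a₀ a₅ : Finset ℤ), x.1 ∉ Finset.Ico a₁ a₄ →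
          (patch c f) x = z x
      · rw [if_pos hcond]
        refine Finset.sum_congr rfl fun w _ => ?_
        have he : embed d hB ρ (patch c f) z = ρ c (restrict d hB z) := by
          unfold embed
          rw [if_pos hcond, restrict_patch]
        rw [he, mul_assoc]
      · rw [if_neg hcond]
        refine Finset.sum_eq_zero fun w _ => ?_
        have he : embed d hB ρ (patch c f) z = 0 := by
          unfold embed
          rw [if_neg hcond]
        rw [he, zero_mul, zero_mul]
    rw [Finset.sum_congr rfl fun z _ => step1 z, sum_patch hB (patch c f)]
    refine Finset.sum_congr rfl fun β _ => ?_
    rw [restrict_patch, patch_patch]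
    have step2 : ∀ w, ρ c β * (embed d hP Q₁ (patch β f) w * embed d hR Q₂ w (patch c g))
        = if ∀ x : (Finset.Ico a₀ a₅ : Finset ℤ), x.1 ∉ Finset.Ico a₀ a₂ →
              (patch β f) x = w x then
            ρ c β * (Q₁ (restrict d hP (patch β f)) (restrict d hP w) *
              embed d hR Q₂ w (patch c g))
          else 0 := by
      intro w
      by_cases hcond : ∀ x : (Finset.Ico a₀ a₅ : Finset ℤ), x.1 ∉ Finset.Ico a₀ a₂ →
          (patch β f) x = w x
      · have he : embed d hP Q₁ (patch β f) w
            = Q₁ (restrict d hP (patch β f)) (restrict d hP w) := by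
          unfold embed
          rw [if_pos hcond]
        rw [if_pos hcond, he]
      · have he : embed d hP Q₁ (patch β f) w = 0 := by
          unfold embed
          rw [if_neg hcond]
        rw [if_neg hcond, he, zero_mul, mul_zero]
    rw [Finset.sum_congr rfl fun w _ => step2 w, sum_patch hP (patch β f)]
    have step3 : ∀ γ : Cfg d (Finset.Ico a₀ a₂),
        embed d hR Q₂ (patch γ (patch β f)) (patch c g)
        = if γ = restrict d hP (patch c g) then
            (if restrict d hB₂B β = restrict d hB₂B c then
              Q₂ (restrict d hR (patch β f)) (restrict d hR (patch c g)) else 0)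
          else 0 := by
      intro γ
      by_cases hγ : γ = restrict d hP (patch c g)
      · subst hγ
        rw [if_pos rfl]
        by_cases hb2 : restrict d hB₂B β = restrict d hB₂B c
        · have hcond : ∀ x : (Finset.Ico a₀ a₅ : Finset ℤ), x.1 ∉ Finset.Ico a₃ a₅ →
              patch (restrict d hP (patch c g)) (patch β f) x = patch c g x := by
            intro x hx
            have hxΛ := x.2
            simp only [Finset.mem_Ico] at hxΛ hx
            by_cases hxP : x.1 ∈ Finset.Ico a₀ a₂
            · rw [patch_apply_mem _ _ hxP]
              rfl
            · have hxB : x.1 ∈ Finset.Ico a₁ a₄ := by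
                simp only [Finset.mem_Ico] at hxP ⊢
                omega
              have hxB₂ : x.1 ∈ Finset.Ico a₂ a₃ := by
                simp only [Finset.mem_Ico] at hxP ⊢
                omega
              rw [patch_apply_not_mem _ _ hxP, patch_apply_mem _ _ hxB,
                patch_apply_mem _ _ hxB]
              exact congrFun hb2 ⟨x.1, hxB₂⟩
          have he : embed d hR Q₂ (patch (restrict d hP (patch c g)) (patch β f)) (patch c g)
              = Q₂ (restrict d hR (patch (restrict d hP (patch c g)) (patch β f)))
                  (restrict d hR (patch c g)) := by
            unfold embed
            rw [if_pos hcond]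
          rw [he, if_pos hb2]
          congr 1
          funext y
          have hy := y.2
          simp only [Finset.mem_Ico] at hy
          simp only [restrict, patch, Finset.mem_Ico]
          split_ifs <;> first | rfl | omega
        · rw [if_neg hb2]
          have hcond : ¬ ∀ x : (Finset.Ico a₀ a₅ : Finset ℤ), x.1 ∉ Finset.Ico a₃ a₅ →
              patch (restrict d hP (patch c g)) (patch β f) x = patch c g x := by
            intro hcond
            apply hb2
            funext y
            have hy := y.2
            have hyB : y.1 ∈ Finset.Ico a₁ a₄ := hB₂B y.2
            have hyP : y.1 ∉ Finset.Ico a₀ a₂ := by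
              simp only [Finset.mem_Ico] at hy ⊢
              omega
            have hyR : ((⟨y.1, hB hyB⟩ : (Finset.Ico a₀ a₅ : Finset ℤ)) : ℤ)
                ∉ Finset.Ico a₃ a₅ := by
              simp only [Finset.mem_Ico] at hy ⊢
              omega
            have heq := hcond ⟨y.1, hB hyB⟩ hyR
            rw [patch_apply_not_mem (x := ⟨y.1, hB hyB⟩) _ _ hyP,
              patch_apply_mem (x := ⟨y.1, hB hyB⟩) _ _ hyB,
              patch_apply_mem (x := ⟨y.1, hB hyB⟩) _ _ hyB] at heq
            exact heq
          unfold embed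
          rw [if_neg hcond]
      · rw [if_neg hγ]
        have hcond : ¬ ∀ x : (Finset.Ico a₀ a₅ : Finset ℤ), x.1 ∉ Finset.Ico a₃ a₅ →
            patch γ (patch β f) x = patch c g x := by
          intro hcond
          apply hγ
          funext y
          have hy := y.2
          have hyR : ((⟨y.1, hP y.2⟩ : (Finset.Ico a₀ a₅ : Finset ℤ)) : ℤ)
              ∉ Finset.Ico a₃ a₅ := by
            simp only [Finset.mem_Ico] at hy ⊢
            omega
          have heq := hcond ⟨y.1, hP y.2⟩ hyR
          rw [patch_apply_mem (x := ⟨y.1, hP y.2⟩) _ _ y.2] at heq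
          exact heq
        unfold embed
        rw [if_neg hcond]
    have step4 : ∀ γ : Cfg d (Finset.Ico a₀ a₂),
        ρ c β * (Q₁ (restrict d hP (patch β f)) (restrict d hP (patch γ (patch β f))) *
          embed d hR Q₂ (patch γ (patch β f)) (patch c g))
        = if γ = restrict d hP (patch c g) then
            ρ c β * (Q₁ (restrict d hP (patch β f)) γ *
              (if restrict d hB₂B β = restrict d hB₂B c then
                Q₂ (restrict d hR (patch β f)) (restrict d hR (patch c g)) else 0))
          else 0 := by
      intro γ
      rw [restrict_patch, step3 γ]
      by_cases hγ : γ = restrict d hP (patch c g)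
      · rw [if_pos hγ, if_pos hγ]
      · rw [if_neg hγ, if_neg hγ, mul_zero, mul_zero]
    rw [Finset.sum_congr rfl fun γ _ => step4 γ, Finset.sum_ite_eq' Finset.univ]
    rw [if_pos (Finset.mem_univ _)]
  -- now the trace side
  have hrhs : ∀ c : Cfg d (Finset.Ico a₁ a₄),
      (ρ * embed d hB₁B (slice (Λ' := Finset.Ico a₁ a₂) Q₁ (restrict d hP f) (restrict d hP g))
        * embed d hB₃B (slice (Λ' := Finset.Ico a₃ a₄) Q₂ (restrict d hR f) (restrict d hR g)))
          c c
      = ∑ β : Cfg d (Finset.Ico a₁ a₄),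
          ρ c β * (Q₁ (restrict d hP (patch β f)) (restrict d hP (patch c g)) *
            (if restrict d hB₂B β = restrict d hB₂B c then
              Q₂ (restrict d hR (patch β f)) (restrict d hR (patch c g)) else 0)) := by
    intro c
    set R₁ : Obs d (Finset.Ico a₁ a₂) :=
      slice (Λ' := Finset.Ico a₁ a₂) Q₁ (restrict d hP f) (restrict d hP g) with hR₁
    set R₂ : Obs d (Finset.Ico a₃ a₄) :=
      slice (Λ' := Finset.Ico a₃ a₄) Q₂ (restrict d hR f) (restrict d hR g) with hR₂
    rw [triple_mul_apply, Finset.sum_comm]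
    have step1 : ∀ β : Cfg d (Finset.Ico a₁ a₄),
        (∑ w, ρ c β * embed d hB₁B R₁ β w * embed d hB₃B R₂ w c)
        = ∑ δ : Cfg d (Finset.Ico a₁ a₂),
            ρ c β * R₁ (restrict d hB₁B β) δ * embed d hB₃B R₂ (patch δ β) c := by
      intro β
      have hstep : ∀ w, ρ c β * embed d hB₁B R₁ β w * embed d hB₃B R₂ w c
          = if ∀ x : (Finset.Ico a₁ a₄ : Finset ℤ), x.1 ∉ Finset.Ico a₁ a₂ → β x = w x then
              ρ c β * R₁ (restrict d hB₁B β) (restrict d hB₁B w) * embed d hB₃B R₂ w c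
            else 0 := by
        intro w
        by_cases hcond : ∀ x : (Finset.Ico a₁ a₄ : Finset ℤ), x.1 ∉ Finset.Ico a₁ a₂ →
            β x = w x
        · have he : embed d hB₁B R₁ β w = R₁ (restrict d hB₁B β) (restrict d hB₁B w) := by
            unfold embed
            rw [if_pos hcond]
          rw [if_pos hcond, he]
        · have he : embed d hB₁B R₁ β w = 0 := by
            unfold embed
            rw [if_neg hcond]
          rw [if_neg hcond, he, mul_zero, zero_mul]
      rw [Finset.sum_congr rfl fun w _ => hstep w, sum_patch hB₁B β]
      refine Finset.sum_congr rfl fun δ _ => ?_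
      rw [restrict_patch]
    have step2 : ∀ β : Cfg d (Finset.Ico a₁ a₄), ∀ δ : Cfg d (Finset.Ico a₁ a₂),
        embed d hB₃B R₂ (patch δ β) c
        = if δ = restrict d hB₁B c then
            (if restrict d hB₂B β = restrict d hB₂B c then
              R₂ (restrict d hB₃B β) (restrict d hB₃B c) else 0)
          else 0 := by
      intro β δ
      by_cases hδ : δ = restrict d hB₁B c
      · subst hδ
        rw [if_pos rfl]
        by_cases hb2 : restrict d hB₂B β = restrict d hB₂B c
        · have hcond : ∀ x : (Finset.Ico a₁ a₄ : Finset ℤ), x.1 ∉ Finset.Ico a₃ a₄ →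
              patch (restrict d hB₁B c) β x = c x := by
            intro x hx
            have hxΛ := x.2
            simp only [Finset.mem_Ico] at hxΛ hx
            by_cases hxB₁ : x.1 ∈ Finset.Ico a₁ a₂
            · rw [patch_apply_mem _ _ hxB₁]
              rfl
            · have hxB₂ : x.1 ∈ Finset.Ico a₂ a₃ := by
                simp only [Finset.mem_Ico] at hxB₁ ⊢
                omega
              rw [patch_apply_not_mem _ _ hxB₁]
              exact congrFun hb2 ⟨x.1, hxB₂⟩
          have he : embed d hB₃B R₂ (patch (restrict d hB₁B c) β) c
              = R₂ (restrict d hB₃B (patch (restrict d hB₁B c) β)) (restrict d hB₃B c) := by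
            unfold embed
            rw [if_pos hcond]
          rw [he, if_pos hb2]
          congr 1
          funext y
          have hy := y.2
          simp only [Finset.mem_Ico] at hy
          simp only [restrict, patch, Finset.mem_Ico]
          split_ifs <;> first | rfl | omega
        · rw [if_neg hb2]
          have hcond : ¬ ∀ x : (Finset.Ico a₁ a₄ : Finset ℤ), x.1 ∉ Finset.Ico a₃ a₄ →
              patch (restrict d hB₁B c) β x = c x := by
            intro hcond
            apply hb2
            funext y
            have hy := y.2
            have hyB : y.1 ∈ Finset.Ico a₁ a₄ := hB₂B y.2
            have hyB₁ : y.1 ∉ Finset.Ico a₁ a₂ := by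
              simp only [Finset.mem_Ico] at hy ⊢
              omega
            have hyB₃ : ((⟨y.1, hyB⟩ : (Finset.Ico a₁ a₄ : Finset ℤ)) : ℤ)
                ∉ Finset.Ico a₃ a₄ := by
              simp only [Finset.mem_Ico] at hy ⊢
              omega
            have heq := hcond ⟨y.1, hyB⟩ hyB₃
            rw [patch_apply_not_mem (x := ⟨y.1, hyB⟩) _ _ hyB₁] at heq
            exact heq
          unfold embed
          rw [if_neg hcond]
      · rw [if_neg hδ]
        have hcond : ¬ ∀ x : (Finset.Ico a₁ a₄ : Finset ℤ), x.1 ∉ Finset.Ico a₃ a₄ →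
            patch δ β x = c x := by
          intro hcond
          apply hδ
          funext y
          have hy := y.2
          have hyB₃ : ((⟨y.1, hB₁B y.2⟩ : (Finset.Ico a₁ a₄ : Finset ℤ)) : ℤ)
              ∉ Finset.Ico a₃ a₄ := by
            simp only [Finset.mem_Ico] at hy ⊢
            omega
          have heq := hcond ⟨y.1, hB₁B y.2⟩ hyB₃
          rw [patch_apply_mem (x := ⟨y.1, hB₁B y.2⟩) _ _ y.2] at heq
          exact heq
        unfold embed
        rw [if_neg hcond]
    rw [Finset.sum_congr rfl fun β _ => step1 β]
    refine Finset.sum_congr rfl fun β _ => ?_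
    have step3 : ∀ δ : Cfg d (Finset.Ico a₁ a₂),
        ρ c β * R₁ (restrict d hB₁B β) δ * embed d hB₃B R₂ (patch δ β) c
        = if δ = restrict d hB₁B c then
            ρ c β * R₁ (restrict d hB₁B β) δ *
              (if restrict d hB₂B β = restrict d hB₂B c then
                R₂ (restrict d hB₃B β) (restrict d hB₃B c) else 0)
          else 0 := by
      intro δ
      rw [step2 β δ]
      by_cases hδ : δ = restrict d hB₁B c
      · rw [if_pos hδ, if_pos hδ]
      · rw [if_neg hδ, if_neg hδ, mul_zero]
    rw [Finset.sum_congr rfl fun δ _ => step3 δ, Finset.sum_ite_eq' Finset.univ]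
    rw [if_pos (Finset.mem_univ _)]
    have hv1 : R₁ (restrict d hB₁B β) (restrict d hB₁B c)
        = Q₁ (restrict d hP (patch β f)) (restrict d hP (patch c g)) := by
      rw [hR₁]
      unfold slice
      congr 1 <;>
      · funext y
        have hy := y.2
        simp only [Finset.mem_Ico] at hy
        simp only [restrict, patch, Finset.mem_Ico]
        split_ifs <;> first | rfl | omega
    have hv2 : R₂ (restrict d hB₃B β) (restrict d hB₃B c)
        = Q₂ (restrict d hR (patch β f)) (restrict d hR (patch c g)) := by
      rw [hR₂]
      unfold slice
      congr 1 <;>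
      · funext y
        have hy := y.2
        simp only [Finset.mem_Ico] at hy
        simp only [restrict, patch, Finset.mem_Ico]
        split_ifs <;> first | rfl | omega
    rw [hv1, hv2, mul_assoc]
  rw [ptr_apply_of_eq hB _ hfg, trace_eq_sum]
  rw [Finset.sum_congr rfl fun c _ => hlhs c, Finset.sum_congr rfl fun c _ => hrhs c]

end Entry
section EntryPair

variable {d : ℕ} {a₀ a₁ a₂ a₃ a₄ a₅ : ℤ}

lemma entry_pair_left
    (h₀₁ : a₀ ≤ a₁) (h₁₂ : a₁ ≤ a₂) (h₂₃ : a₂ ≤ a₃) (h₃₄ : a₃ ≤ a₄) (h₄₅ : a₄ ≤ a₅)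
    (hB : Finset.Ico a₁ a₄ ⊆ Finset.Ico a₀ a₅)
    (hP : Finset.Ico a₀ a₂ ⊆ Finset.Ico a₀ a₅)
    (hC : Finset.Ico a₄ a₅ ⊆ Finset.Ico a₀ a₅)
    (hB₁B : Finset.Ico a₁ a₂ ⊆ Finset.Ico a₁ a₄)
    (ρ : Obs d (Finset.Ico a₁ a₄)) (Q₁ : Obs d (Finset.Ico a₀ a₂))
    (f y : Cfg d (Finset.Ico a₀ a₅))
    (hfy : restrict d hB f = restrict d hB y) :
    ptr d hB (embed d hB ρ * embed d hP Q₁) f y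
      = if restrict d hC f = restrict d hC y then
          Matrix.trace (ρ * embed d hB₁B
            (slice (Λ' := Finset.Ico a₁ a₂) Q₁ (restrict d hP f) (restrict d hP y)))
        else 0 := by
  classical
  have hB₂₃B : Finset.Ico a₂ a₄ ⊆ Finset.Ico a₁ a₄ :=
    Finset.Ico_subset_Ico (by omega) (by omega)
  set R₁ : Obs d (Finset.Ico a₁ a₂) :=
    slice (Λ' := Finset.Ico a₁ a₂) Q₁ (restrict d hP f) (restrict d hP y) with hR₁
  rw [ptr_apply_of_eq hB _ hfy]
  have hlhs : ∀ c : Cfg d (Finset.Ico a₁ a₄),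
      (embed d hB ρ * embed d hP Q₁) (patch c f) (patch c y)
      = ∑ β : Cfg d (Finset.Ico a₁ a₄),
          ρ c β * (if restrict d hB₂₃B β = restrict d hB₂₃B c
              ∧ restrict d hC f = restrict d hC y then
            Q₁ (restrict d hP (patch β f)) (restrict d hP (patch c y)) else 0) := by
    intro c
    rw [Matrix.mul_apply]
    have step1 : ∀ z : Cfg d (Finset.Ico a₀ a₅),
        embed d hB ρ (patch c f) z * embed d hP Q₁ z (patch c y)
        = if ∀ x : (Finset.Ico a₀ a₅ : Finset ℤ), x.1 ∉ Finset.Ico a₁ a₄ →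
              (patch c f) x = z x then
            ρ c (restrict d hB z) * embed d hP Q₁ z (patch c y)
          else 0 := by
      intro z
      by_cases hcond : ∀ x : (Finset.Ico a₀ a₅ : Finset ℤ), x.1 ∉ Finset.Ico a₁ a₄ →
          (patch c f) x = z x
      · have he : embed d hB ρ (patch c f) z = ρ c (restrict d hB z) := by
          unfold embed
          rw [if_pos hcond, restrict_patch]
        rw [if_pos hcond, he]
      · have he : embed d hB ρ (patch c f) z = 0 := by
          unfold embed
          rw [if_neg hcond]
        rw [if_neg hcond, he, zero_mul]
    rw [Finset.sum_congr rfl fun z _ => step1 z, sum_patch hB (patch c f)]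
    refine Finset.sum_congr rfl fun β _ => ?_
    rw [restrict_patch, patch_patch]
    congr 1
    -- embQ₁ (patch β f) (patch c y) = ite (...)
    by_cases hconj : restrict d hB₂₃B β = restrict d hB₂₃B c
        ∧ restrict d hC f = restrict d hC y
    · have hcond : ∀ x : (Finset.Ico a₀ a₅ : Finset ℤ), x.1 ∉ Finset.Ico a₀ a₂ →
          patch β f x = patch c y x := by
        intro x hx
        have hxΛ := x.2
        simp only [Finset.mem_Ico] at hxΛ hx
        by_cases hxB : x.1 ∈ Finset.Ico a₁ a₄
        · have hxB₂₃ : x.1 ∈ Finset.Ico a₂ a₄ := by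
            simp only [Finset.mem_Ico] at hxB ⊢
            omega
          rw [patch_apply_mem _ _ hxB, patch_apply_mem _ _ hxB]
          exact congrFun hconj.1 ⟨x.1, hxB₂₃⟩
        · have hxC : x.1 ∈ Finset.Ico a₄ a₅ := by
            simp only [Finset.mem_Ico] at hxB ⊢
            omega
          rw [patch_apply_not_mem _ _ hxB, patch_apply_not_mem _ _ hxB]
          exact congrFun hconj.2 ⟨x.1, hxC⟩
      have he : embed d hP Q₁ (patch β f) (patch c y)
          = Q₁ (restrict d hP (patch β f)) (restrict d hP (patch c y)) := by
        unfold embed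
        rw [if_pos hcond]
      rw [if_pos hconj, he]
    · have hcond : ¬ ∀ x : (Finset.Ico a₀ a₅ : Finset ℤ), x.1 ∉ Finset.Ico a₀ a₂ →
          patch β f x = patch c y x := by
        intro hcond
        apply hconj
        constructor
        · funext y'
          have hy' := y'.2
          have hyB : y'.1 ∈ Finset.Ico a₁ a₄ := hB₂₃B y'.2
          have hyP : ((⟨y'.1, hB hyB⟩ : (Finset.Ico a₀ a₅ : Finset ℤ)) : ℤ)
              ∉ Finset.Ico a₀ a₂ := by
            simp only [Finset.mem_Ico] at hy' ⊢
            omega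
          have heq := hcond ⟨y'.1, hB hyB⟩ hyP
          rw [patch_apply_mem (x := ⟨y'.1, hB hyB⟩) _ _ hyB,
            patch_apply_mem (x := ⟨y'.1, hB hyB⟩) _ _ hyB] at heq
          exact heq
        · funext y'
          have hy' := y'.2
          have hyB : y'.1 ∉ Finset.Ico a₁ a₄ := by
            simp only [Finset.mem_Ico] at hy' ⊢
            omega
          have hyP : ((⟨y'.1, hC y'.2⟩ : (Finset.Ico a₀ a₅ : Finset ℤ)) : ℤ)
              ∉ Finset.Ico a₀ a₂ := by
            simp only [Finset.mem_Ico] at hy' ⊢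
            omega
          have heq := hcond ⟨y'.1, hC y'.2⟩ hyP
          rw [patch_apply_not_mem (x := ⟨y'.1, hC y'.2⟩) _ _ hyB,
            patch_apply_not_mem (x := ⟨y'.1, hC y'.2⟩) _ _ hyB] at heq
          exact heq
      rw [if_neg hconj]
      unfold embed
      rw [if_neg hcond]
  rw [Finset.sum_congr rfl fun c _ => hlhs c]
  by_cases hCc : restrict d hC f = restrict d hC y
  · rw [if_pos hCc, trace_eq_sum]
    refine Finset.sum_congr rfl fun c _ => ?_
    rw [Matrix.mul_apply]
    refine Finset.sum_congr rfl fun β _ => ?_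
    congr 1
    have hval : R₁ (restrict d hB₁B β) (restrict d hB₁B c)
        = Q₁ (restrict d hP (patch β f)) (restrict d hP (patch c y)) := by
      rw [hR₁]
      unfold slice
      congr 1 <;>
      · funext y'
        have hy' := y'.2
        simp only [Finset.mem_Ico] at hy'
        simp only [restrict, patch, Finset.mem_Ico]
        split_ifs <;> first | rfl | omega
    by_cases hb : restrict d hB₂₃B β = restrict d hB₂₃B c
    · have hcond : ∀ x : (Finset.Ico a₁ a₄ : Finset ℤ), x.1 ∉ Finset.Ico a₁ a₂ →
          β x = c x := by
        intro x hx
        have hxΛ := x.2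
        have hxB₂₃ : x.1 ∈ Finset.Ico a₂ a₄ := by
          simp only [Finset.mem_Ico] at hxΛ hx ⊢
          omega
        exact congrFun hb ⟨x.1, hxB₂₃⟩
      have he : embed d hB₁B R₁ β c = R₁ (restrict d hB₁B β) (restrict d hB₁B c) := by
        unfold embed
        rw [if_pos hcond]
      rw [he, hval, if_pos (by exact ⟨hb, hCc⟩)]
    · have hcond : ¬ ∀ x : (Finset.Ico a₁ a₄ : Finset ℤ), x.1 ∉ Finset.Ico a₁ a₂ →
          β x = c x := by
        intro hcond
        apply hb
        funext y'
        have hy' := y'.2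
        have hyB : y'.1 ∈ Finset.Ico a₁ a₄ := hB₂₃B y'.2
        have hyB₁ : ((⟨y'.1, hyB⟩ : (Finset.Ico a₁ a₄ : Finset ℤ)) : ℤ)
            ∉ Finset.Ico a₁ a₂ := by
          simp only [Finset.mem_Ico] at hy' ⊢
          omega
        exact hcond ⟨y'.1, hyB⟩ hyB₁
      have he : embed d hB₁B R₁ β c = 0 := by
        unfold embed
        rw [if_neg hcond]
      rw [he, if_neg (by
        intro hconj
        exact hb hconj.1)]
  · rw [if_neg hCc]
    refine Finset.sum_eq_zero fun c _ => ?_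
    refine Finset.sum_eq_zero fun β _ => ?_
    rw [if_neg (by
      intro hconj
      exact hCc hconj.2), mul_zero]

lemma entry_pair_right
    (h₀₁ : a₀ ≤ a₁) (h₁₂ : a₁ ≤ a₂) (h₂₃ : a₂ ≤ a₃) (h₃₄ : a₃ ≤ a₄) (h₄₅ : a₄ ≤ a₅)
    (hB : Finset.Ico a₁ a₄ ⊆ Finset.Ico a₀ a₅)
    (hR : Finset.Ico a₃ a₅ ⊆ Finset.Ico a₀ a₅)
    (hA : Finset.Ico a₀ a₁ ⊆ Finset.Ico a₀ a₅)
    (hB₃B : Finset.Ico a₃ a₄ ⊆ Finset.Ico a₁ a₄)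
    (ρ : Obs d (Finset.Ico a₁ a₄)) (Q₂ : Obs d (Finset.Ico a₃ a₅))
    (y g : Cfg d (Finset.Ico a₀ a₅))
    (hyg : restrict d hB y = restrict d hB g) :
    ptr d hB (embed d hB ρ * embed d hR Q₂) y g
      = if restrict d hA y = restrict d hA g then
          Matrix.trace (ρ * embed d hB₃B
            (slice (Λ' := Finset.Ico a₃ a₄) Q₂ (restrict d hR y) (restrict d hR g)))
        else 0 := by
  classical
  have hB₁₂B : Finset.Ico a₁ a₃ ⊆ Finset.Ico a₁ a₄ :=
    Finset.Ico_subset_Ico (by omega) (by omega)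
  set R₂ : Obs d (Finset.Ico a₃ a₄) :=
    slice (Λ' := Finset.Ico a₃ a₄) Q₂ (restrict d hR y) (restrict d hR g) with hR₂
  rw [ptr_apply_of_eq hB _ hyg]
  have hlhs : ∀ c : Cfg d (Finset.Ico a₁ a₄),
      (embed d hB ρ * embed d hR Q₂) (patch c y) (patch c g)
      = ∑ β : Cfg d (Finset.Ico a₁ a₄),
          ρ c β * (if restrict d hB₁₂B β = restrict d hB₁₂B c
              ∧ restrict d hA y = restrict d hA g then
            Q₂ (restrict d hR (patch β y)) (restrict d hR (patch c g)) else 0) := by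
    intro c
    rw [Matrix.mul_apply]
    have step1 : ∀ z : Cfg d (Finset.Ico a₀ a₅),
        embed d hB ρ (patch c y) z * embed d hR Q₂ z (patch c g)
        = if ∀ x : (Finset.Ico a₀ a₅ : Finset ℤ), x.1 ∉ Finset.Ico a₁ a₄ →
              (patch c y) x = z x then
            ρ c (restrict d hB z) * embed d hR Q₂ z (patch c g)
          else 0 := by
      intro z
      by_cases hcond : ∀ x : (Finset.Ico a₀ a₅ : Finset ℤ), x.1 ∉ Finset.Ico a₁ a₄ →
          (patch c y) x = z x
      · have he : embed d hB ρ (patch c y) z = ρ c (restrict d hB z) := by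
          unfold embed
          rw [if_pos hcond, restrict_patch]
        rw [if_pos hcond, he]
      · have he : embed d hB ρ (patch c y) z = 0 := by
          unfold embed
          rw [if_neg hcond]
        rw [if_neg hcond, he, zero_mul]
    rw [Finset.sum_congr rfl fun z _ => step1 z, sum_patch hB (patch c y)]
    refine Finset.sum_congr rfl fun β _ => ?_
    rw [restrict_patch, patch_patch]
    congr 1
    by_cases hconj : restrict d hB₁₂B β = restrict d hB₁₂B c
        ∧ restrict d hA y = restrict d hA g
    · have hcond : ∀ x : (Finset.Ico a₀ a₅ : Finset ℤ), x.1 ∉ Finset.Ico a₃ a₅ →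
          patch β y x = patch c g x := by
        intro x hx
        have hxΛ := x.2
        simp only [Finset.mem_Ico] at hxΛ hx
        by_cases hxB : x.1 ∈ Finset.Ico a₁ a₄
        · have hxB₁₂ : x.1 ∈ Finset.Ico a₁ a₃ := by
            simp only [Finset.mem_Ico] at hxB ⊢
            omega
          rw [patch_apply_mem _ _ hxB, patch_apply_mem _ _ hxB]
          exact congrFun hconj.1 ⟨x.1, hxB₁₂⟩
        · have hxA : x.1 ∈ Finset.Ico a₀ a₁ := by
            simp only [Finset.mem_Ico] at hxB ⊢
            omega
          rw [patch_apply_not_mem _ _ hxB, patch_apply_not_mem _ _ hxB]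
          exact congrFun hconj.2 ⟨x.1, hxA⟩
      have he : embed d hR Q₂ (patch β y) (patch c g)
          = Q₂ (restrict d hR (patch β y)) (restrict d hR (patch c g)) := by
        unfold embed
        rw [if_pos hcond]
      rw [if_pos hconj, he]
    · have hcond : ¬ ∀ x : (Finset.Ico a₀ a₅ : Finset ℤ), x.1 ∉ Finset.Ico a₃ a₅ →
          patch β y x = patch c g x := by
        intro hcond
        apply hconj
        constructor
        · funext y'
          have hy' := y'.2
          have hyB : y'.1 ∈ Finset.Ico a₁ a₄ := hB₁₂B y'.2
          have hyR : ((⟨y'.1, hB hyB⟩ : (Finset.Ico a₀ a₅ : Finset ℤ)) : ℤ)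
              ∉ Finset.Ico a₃ a₅ := by
            simp only [Finset.mem_Ico] at hy' ⊢
            omega
          have heq := hcond ⟨y'.1, hB hyB⟩ hyR
          rw [patch_apply_mem (x := ⟨y'.1, hB hyB⟩) _ _ hyB,
            patch_apply_mem (x := ⟨y'.1, hB hyB⟩) _ _ hyB] at heq
          exact heq
        · funext y'
          have hy' := y'.2
          have hyB : y'.1 ∉ Finset.Ico a₁ a₄ := by
            simp only [Finset.mem_Ico] at hy' ⊢
            omega
          have hyR : ((⟨y'.1, hA y'.2⟩ : (Finset.Ico a₀ a₅ : Finset ℤ)) : ℤ)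
              ∉ Finset.Ico a₃ a₅ := by
            simp only [Finset.mem_Ico] at hy' ⊢
            omega
          have heq := hcond ⟨y'.1, hA y'.2⟩ hyR
          rw [patch_apply_not_mem (x := ⟨y'.1, hA y'.2⟩) _ _ hyB,
            patch_apply_not_mem (x := ⟨y'.1, hA y'.2⟩) _ _ hyB] at heq
          exact heq
      rw [if_neg hconj]
      unfold embed
      rw [if_neg hcond]
  rw [Finset.sum_congr rfl fun c _ => hlhs c]
  by_cases hAc : restrict d hA y = restrict d hA g
  · rw [if_pos hAc, trace_eq_sum]
    refine Finset.sum_congr rfl fun c _ => ?_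
    rw [Matrix.mul_apply]
    refine Finset.sum_congr rfl fun β _ => ?_
    congr 1
    have hval : R₂ (restrict d hB₃B β) (restrict d hB₃B c)
        = Q₂ (restrict d hR (patch β y)) (restrict d hR (patch c g)) := by
      rw [hR₂]
      unfold slice
      congr 1 <;>
      · funext y'
        have hy' := y'.2
        simp only [Finset.mem_Ico] at hy'
        simp only [restrict, patch, Finset.mem_Ico]
        split_ifs <;> first | rfl | omega
    by_cases hb : restrict d hB₁₂B β = restrict d hB₁₂B c
    · have hcond : ∀ x : (Finset.Ico a₁ a₄ : Finset ℤ), x.1 ∉ Finset.Ico a₃ a₄ →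
          β x = c x := by
        intro x hx
        have hxΛ := x.2
        have hxB₁₂ : x.1 ∈ Finset.Ico a₁ a₃ := by
          simp only [Finset.mem_Ico] at hxΛ hx ⊢
          omega
        exact congrFun hb ⟨x.1, hxB₁₂⟩
      have he : embed d hB₃B R₂ β c = R₂ (restrict d hB₃B β) (restrict d hB₃B c) := by
        unfold embed
        rw [if_pos hcond]
      rw [he, hval, if_pos (by exact ⟨hb, hAc⟩)]
    · have hcond : ¬ ∀ x : (Finset.Ico a₁ a₄ : Finset ℤ), x.1 ∉ Finset.Ico a₃ a₄ →
          β x = c x := by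
        intro hcond
        apply hb
        funext y'
        have hy' := y'.2
        have hyB : y'.1 ∈ Finset.Ico a₁ a₄ := hB₁₂B y'.2
        have hyB₃ : ((⟨y'.1, hyB⟩ : (Finset.Ico a₁ a₄ : Finset ℤ)) : ℤ)
            ∉ Finset.Ico a₃ a₄ := by
          simp only [Finset.mem_Ico] at hy' ⊢
          omega
        exact hcond ⟨y'.1, hyB⟩ hyB₃
      have he : embed d hB₃B R₂ β c = 0 := by
        unfold embed
        rw [if_neg hcond]
      rw [he, if_neg (by
        intro hconj
        exact hb hconj.1)]
  · rw [if_neg hAc]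
    refine Finset.sum_eq_zero fun c _ => ?_
    refine Finset.sum_eq_zero fun β _ => ?_
    rw [if_neg (by
      intro hconj
      exact hAc hconj.2), mul_zero]

end EntryPair
section EntryProduct

variable {d : ℕ} {a₀ a₁ a₂ a₃ a₄ a₅ : ℤ}

lemma entry_product
    (h₀₁ : a₀ ≤ a₁) (h₁₂ : a₁ ≤ a₂) (h₂₃ : a₂ ≤ a₃) (h₃₄ : a₃ ≤ a₄) (h₄₅ : a₄ ≤ a₅)
    (hB : Finset.Ico a₁ a₄ ⊆ Finset.Ico a₀ a₅)
    (hP : Finset.Ico a₀ a₂ ⊆ Finset.Ico a₀ a₅)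
    (hR : Finset.Ico a₃ a₅ ⊆ Finset.Ico a₀ a₅)
    (hA : Finset.Ico a₀ a₁ ⊆ Finset.Ico a₀ a₅)
    (hC : Finset.Ico a₄ a₅ ⊆ Finset.Ico a₀ a₅)
    (hB₁B : Finset.Ico a₁ a₂ ⊆ Finset.Ico a₁ a₄)
    (hB₃B : Finset.Ico a₃ a₄ ⊆ Finset.Ico a₁ a₄)
    (ρ : Obs d (Finset.Ico a₁ a₄)) (Q₁ : Obs d (Finset.Ico a₀ a₂))
    (Q₂ : Obs d (Finset.Ico a₃ a₅)) (f g : Cfg d (Finset.Ico a₀ a₅))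
    (hfg : restrict d hB f = restrict d hB g) :
    (ptr d hB (embed d hB ρ * embed d hP Q₁) * ptr d hB (embed d hB ρ * embed d hR Q₂)) f g
      = Matrix.trace (ρ * embed d hB₁B
            (slice (Λ' := Finset.Ico a₁ a₂) Q₁ (restrict d hP f) (restrict d hP g)))
        * Matrix.trace (ρ * embed d hB₃B
            (slice (Λ' := Finset.Ico a₃ a₄) Q₂ (restrict d hR f) (restrict d hR g))) := by
  classical
  rw [Matrix.mul_apply]
  set y₀ : Cfg d (Finset.Ico a₀ a₅) := fun x => if x.1 < a₁ then g x else f x with hy₀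
  have key : ∀ y : Cfg d (Finset.Ico a₀ a₅),
      ptr d hB (embed d hB ρ * embed d hP Q₁) f y *
        ptr d hB (embed d hB ρ * embed d hR Q₂) y g
      = if y = y₀ then
          Matrix.trace (ρ * embed d hB₁B
              (slice (Λ' := Finset.Ico a₁ a₂) Q₁ (restrict d hP f) (restrict d hP g)))
            * Matrix.trace (ρ * embed d hB₃B
              (slice (Λ' := Finset.Ico a₃ a₄) Q₂ (restrict d hR f) (restrict d hR g)))
        else 0 := by
    intro y
    by_cases hy : y = y₀
    · subst hy
      rw [if_pos rfl]
      have hBfy : restrict d hB f = restrict d hB y₀ := by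
        funext x
        have hx := x.2
        simp only [Finset.mem_Ico] at hx
        simp only [restrict, hy₀]
        rw [if_neg (by omega)]
      have hCfy : restrict d hC f = restrict d hC y₀ := by
        funext x
        have hx := x.2
        simp only [Finset.mem_Ico] at hx
        simp only [restrict, hy₀]
        rw [if_neg (by omega)]
      have hBy₀g : restrict d hB y₀ = restrict d hB g := hBfy.symm.trans hfg
      have hAy₀g : restrict d hA y₀ = restrict d hA g := by
        funext x
        have hx := x.2
        simp only [Finset.mem_Ico] at hx
        simp only [restrict, hy₀]
        rw [if_pos (by omega)]
      rw [entry_pair_left h₀₁ h₁₂ h₂₃ h₃₄ h₄₅ hB hP hC hB₁B ρ Q₁ f y₀ hBfy,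
        entry_pair_right h₀₁ h₁₂ h₂₃ h₃₄ h₄₅ hB hR hA hB₃B ρ Q₂ y₀ g hBy₀g,
        if_pos hCfy, if_pos hAy₀g]
      have hs1 : slice (Λ' := Finset.Ico a₁ a₂) Q₁ (restrict d hP f) (restrict d hP y₀)
          = slice (Λ' := Finset.Ico a₁ a₂) Q₁ (restrict d hP f) (restrict d hP g) := by
        unfold slice
        funext b b'
        congr 1
        funext z
        have hz := z.2
        simp only [Finset.mem_Ico] at hz
        simp only [patch, restrict, hy₀, Finset.mem_Ico]
        split_ifs <;> first | rfl | omega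
      have hs2 : restrict d hR y₀ = restrict d hR f := by
        funext x
        have hx := x.2
        simp only [Finset.mem_Ico] at hx
        simp only [restrict, hy₀]
        rw [if_neg (by omega)]
      rw [hs1, hs2]
    · rw [if_neg hy]
      by_cases hBfy : restrict d hB f = restrict d hB y
      · by_cases hCfy : restrict d hC f = restrict d hC y
        · have hByg : restrict d hB y = restrict d hB g := hBfy.symm.trans hfg
          by_cases hAyg : restrict d hA y = restrict d hA g
          · exfalso
            apply hy
            funext x
            have hx := x.2
            simp only [Finset.mem_Ico] at hx
            simp only [hy₀]
            by_cases hx1 : x.1 < a₁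
            · rw [if_pos hx1]
              have hxA : x.1 ∈ Finset.Ico a₀ a₁ := by
                simp only [Finset.mem_Ico]
                omega
              exact congrFun hAyg ⟨x.1, hxA⟩
            · rw [if_neg hx1]
              by_cases hx4 : x.1 < a₄
              · have hxB : x.1 ∈ Finset.Ico a₁ a₄ := by
                  simp only [Finset.mem_Ico]
                  omega
                exact (congrFun hBfy ⟨x.1, hxB⟩).symm
              · have hxC : x.1 ∈ Finset.Ico a₄ a₅ := by
                  simp only [Finset.mem_Ico]
                  omega
                exact (congrFun hCfy ⟨x.1, hxC⟩).symm
          · rw [entry_pair_right h₀₁ h₁₂ h₂₃ h₃₄ h₄₅ hB hR hA hB₃B ρ Q₂ y g hByg,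
              if_neg hAyg, mul_zero]
        · rw [entry_pair_left h₀₁ h₁₂ h₂₃ h₃₄ h₄₅ hB hP hC hB₁B ρ Q₁ f y hBfy,
            if_neg hCfy, zero_mul]
      · rw [ptr_apply_of_ne hB _ hBfy, zero_mul]
  rw [Finset.sum_congr rfl fun y _ => key y, Finset.sum_ite_eq' Finset.univ]
  rw [if_pos (Finset.mem_univ _)]

end EntryProduct
section Final

variable {d : ℕ}

@[simp] lemma embed_zero {Λ' Λ : Finset ℤ} (h : Λ' ⊆ Λ) :
    embed d h (0 : Obs d Λ') = 0 := by
  funext f g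
  unfold embed
  simp

lemma embed_smul {Λ' Λ : Finset ℤ} (h : Λ' ⊆ Λ) (s : ℂ) (R : Obs d Λ') :
    embed d h (s • R) = s • embed d h R := by
  funext f g
  unfold embed
  show _ = s * (if ∀ x : Λ, x.1 ∉ Λ' → f x = g x then R (restrict d h f) (restrict d h g) else 0)
  by_cases hc : ∀ x : Λ, x.1 ∉ Λ' → f x = g x
  · simp [hc, Matrix.smul_apply]
  · simp [hc]

@[simp] lemma ptr_zero {Λ' Λ : Finset ℤ} (h : Λ' ⊆ Λ) :
    ptr d h (0 : Obs d Λ) = 0 := by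
  funext f g
  unfold ptr
  simp

lemma ptr_product_bdiag {Λ' Λ : Finset ℤ} (h : Λ' ⊆ Λ) (M N : Obs d Λ)
    {f g : Cfg d Λ} (hfg : restrict d h f ≠ restrict d h g) :
    (ptr d h M * ptr d h N) f g = 0 := by
  rw [Matrix.mul_apply]
  refine Finset.sum_eq_zero fun y _ => ?_
  by_cases h1 : restrict d h f = restrict d h y
  · rw [ptr_apply_of_ne h N (fun he => hfg (h1.trans he)), mul_zero]
  · rw [ptr_apply_of_ne h M h1, zero_mul]

end Final
/-- Lemma `SchmidtDecompEstimate2`. Under uniform clustering with decay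
`ε`, for adjacent intervals `A B₁ B₂ B₃ C` with `|A|, |B₁| ≤ n`, `|B₂| ≥ ℓ`,
`|B₃|, |C| ≤ m` and with `B = B₁B₂B₃`:
`‖tr_B(ρ^B Q_{AB₁} Q_{B₃C}) - tr_B(ρ^B Q_{AB₁}) tr_B(ρ^B Q_{B₃C})‖ ≤
  d^{2n+2m} ‖Q_{AB₁}‖ ‖Q_{B₃C}‖ ε(ℓ)`. -/
theorem schmidt_decomp_estimate_two (d r : ℕ) (J : ℝ)
    (hd : 2 ≤ d) (hr : 0 < r) (hJ : 0 < J)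
    (Φ : Interaction d r J) (ε : ℕ → ℝ) (hclu : UniformClustering Φ ε)
    -- adjacent intervals A = [a₀,a₁), B₁ = [a₁,a₂), B₂ = [a₂,a₃), B₃ = [a₃,a₄), C = [a₄,a₅)
    (a₀ a₁ a₂ a₃ a₄ a₅ : ℤ)
    (h₀₁ : a₀ ≤ a₁) (h₁₂ : a₁ ≤ a₂) (h₂₃ : a₂ ≤ a₃) (h₃₄ : a₃ ≤ a₄) (h₄₅ : a₄ ≤ a₅)
    (n m ℓ : ℕ)
    (hA : a₁ - a₀ ≤ (n : ℤ)) (hB₁ : a₂ - a₁ ≤ (n : ℤ))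
    (hB₂ : (ℓ : ℤ) ≤ a₃ - a₂)
    (hB₃ : a₄ - a₃ ≤ (m : ℤ)) (hC : a₅ - a₄ ≤ (m : ℤ))
    (Q₁ : Obs d (Finset.Ico a₀ a₂)) (Q₂ : Obs d (Finset.Ico a₃ a₅)) :
    opNorm d
      (ptr d (Finset.Ico_subset_Ico (by omega) (by omega) :
            Finset.Ico a₁ a₄ ⊆ Finset.Ico a₀ a₅)
          (embed d (Finset.Ico_subset_Ico (by omega) (by omega) :
                Finset.Ico a₁ a₄ ⊆ Finset.Ico a₀ a₅)
              (gibbs Φ (Finset.Ico a₁ a₄)) *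
            embed d (Finset.Ico_subset_Ico (by omega) (by omega) :
                Finset.Ico a₀ a₂ ⊆ Finset.Ico a₀ a₅) Q₁ *
            embed d (Finset.Ico_subset_Ico (by omega) (by omega) :
                Finset.Ico a₃ a₅ ⊆ Finset.Ico a₀ a₅) Q₂) -
        ptr d (Finset.Ico_subset_Ico (by omega) (by omega) :
            Finset.Ico a₁ a₄ ⊆ Finset.Ico a₀ a₅)
          (embed d (Finset.Ico_subset_Ico (by omega) (by omega) :
                Finset.Ico a₁ a₄ ⊆ Finset.Ico a₀ a₅)
              (gibbs Φ (Finset.Ico a₁ a₄)) *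
            embed d (Finset.Ico_subset_Ico (by omega) (by omega) :
                Finset.Ico a₀ a₂ ⊆ Finset.Ico a₀ a₅) Q₁) *
        ptr d (Finset.Ico_subset_Ico (by omega) (by omega) :
            Finset.Ico a₁ a₄ ⊆ Finset.Ico a₀ a₅)
          (embed d (Finset.Ico_subset_Ico (by omega) (by omega) :
                Finset.Ico a₁ a₄ ⊆ Finset.Ico a₀ a₅)
              (gibbs Φ (Finset.Ico a₁ a₄)) *
            embed d (Finset.Ico_subset_Ico (by omega) (by omega) :
                Finset.Ico a₃ a₅ ⊆ Finset.Ico a₀ a₅) Q₂)) ≤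
      (d : ℝ) ^ (2 * n + 2 * m) * opNorm d Q₁ * opNorm d Q₂ * ε ℓ := by
  classical
  have hB : Finset.Ico a₁ a₄ ⊆ Finset.Ico a₀ a₅ :=
    Finset.Ico_subset_Ico (by omega) (by omega)
  have hP : Finset.Ico a₀ a₂ ⊆ Finset.Ico a₀ a₅ :=
    Finset.Ico_subset_Ico (by omega) (by omega)
  have hR' : Finset.Ico a₃ a₅ ⊆ Finset.Ico a₀ a₅ :=
    Finset.Ico_subset_Ico (by omega) (by omega)
  have hA' : Finset.Ico a₀ a₁ ⊆ Finset.Ico a₀ a₅ :=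
    Finset.Ico_subset_Ico (by omega) (by omega)
  have hC' : Finset.Ico a₄ a₅ ⊆ Finset.Ico a₀ a₅ :=
    Finset.Ico_subset_Ico (by omega) (by omega)
  have hB₁B : Finset.Ico a₁ a₂ ⊆ Finset.Ico a₁ a₄ :=
    Finset.Ico_subset_Ico (by omega) (by omega)
  have hB₃B : Finset.Ico a₃ a₄ ⊆ Finset.Ico a₁ a₄ :=
    Finset.Ico_subset_Ico (by omega) (by omega)
  have hB₁P : Finset.Ico a₁ a₂ ⊆ Finset.Ico a₀ a₂ :=
    Finset.Ico_subset_Ico (by omega) (by omega)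
  have hB₃R : Finset.Ico a₃ a₄ ⊆ Finset.Ico a₃ a₅ :=
    Finset.Ico_subset_Ico (by omega) (by omega)
  have hε : 0 ≤ ε ℓ := by
    have h0 := hclu a₂ a₂ a₃ a₃ le_rfl h₂₃ le_rfl ℓ hB₂ 0 0
      (by rw [opNorm_zero]; exact zero_le_one) (by rw [opNorm_zero]; exact zero_le_one)
    simpa [expec, embed_zero] using h0
  have hd1 : (1 : ℝ) ≤ (d : ℝ) := by
    have : 1 ≤ d := le_trans one_le_two hd
    exact_mod_cast this
  by_cases n1 : opNorm d Q₁ = 0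
  · have hz := eq_zero_of_opNorm_eq_zero n1
    subst hz
    simp [ptr_zero, opNorm_zero]
  by_cases n2 : opNorm d Q₂ = 0
  · have hz := eq_zero_of_opNorm_eq_zero n2
    subst hz
    simp [ptr_zero, opNorm_zero]
  have hq1 : 0 < opNorm d Q₁ := lt_of_le_of_ne (opNorm_nonneg _) (Ne.symm n1)
  have hq2 : 0 < opNorm d Q₂ := lt_of_le_of_ne (opNorm_nonneg _) (Ne.symm n2)
  have hc0 : 0 ≤ opNorm d Q₁ * opNorm d Q₂ * ε ℓ :=
    mul_nonneg (mul_nonneg hq1.le hq2.le) hε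
  refine le_trans
    (opNorm_le_of_bdiag hB _ (opNorm d Q₁ * opNorm d Q₂ * ε ℓ) hc0 ?_ ?_) ?_
  · intro f g hfg
    rw [Matrix.sub_apply, ptr_apply_of_ne hB _ hfg, ptr_product_bdiag hB _ _ hfg, sub_zero]
  · intro f g
    by_cases hfg : restrict d hB f = restrict d hB g
    · rw [Matrix.sub_apply,
        entry_triple h₀₁ h₁₂ h₂₃ h₃₄ h₄₅ hB hP hR' hB₁B hB₃B
          (gibbs Φ (Finset.Ico a₁ a₄)) Q₁ Q₂ f g hfg,
        entry_product h₀₁ h₁₂ h₂₃ h₃₄ h₄₅ hB hP hR' hA' hC' hB₁B hB₃B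
          (gibbs Φ (Finset.Ico a₁ a₄)) Q₁ Q₂ f g hfg]
      set R₁ : Obs d (Finset.Ico a₁ a₂) :=
        slice (Λ' := Finset.Ico a₁ a₂) Q₁ (restrict d hP f) (restrict d hP g) with hR₁def
      set R₂ : Obs d (Finset.Ico a₃ a₄) :=
        slice (Λ' := Finset.Ico a₃ a₄) Q₂ (restrict d hR' f) (restrict d hR' g) with hR₂def
      set QA : Obs d (Finset.Ico a₁ a₂) := ((opNorm d Q₁ : ℝ) : ℂ)⁻¹ • R₁ with hQAdef
      set QC : Obs d (Finset.Ico a₃ a₄) := ((opNorm d Q₂ : ℝ) : ℂ)⁻¹ • R₂ with hQCdef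
      have hcast1 : ‖(((opNorm d Q₁ : ℝ)) : ℂ)‖ = opNorm d Q₁ := by
        rw [Complex.norm_real, Real.norm_eq_abs, abs_of_nonneg hq1.le]
      have hcast2 : ‖(((opNorm d Q₂ : ℝ)) : ℂ)‖ = opNorm d Q₂ := by
        rw [Complex.norm_real, Real.norm_eq_abs, abs_of_nonneg hq2.le]
      have hnormQA : opNorm d QA ≤ 1 := by
        rw [hQAdef, opNorm_smul, norm_inv, hcast1]
        calc (opNorm d Q₁)⁻¹ * opNorm d R₁
            ≤ (opNorm d Q₁)⁻¹ * opNorm d Q₁ :=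
              mul_le_mul_of_nonneg_left (opNorm_slice_le hB₁P Q₁ _ _)
                (inv_nonneg.mpr hq1.le)
          _ = 1 := inv_mul_cancel₀ n1
      have hnormQC : opNorm d QC ≤ 1 := by
        rw [hQCdef, opNorm_smul, norm_inv, hcast2]
        calc (opNorm d Q₂)⁻¹ * opNorm d R₂
            ≤ (opNorm d Q₂)⁻¹ * opNorm d Q₂ :=
              mul_le_mul_of_nonneg_left (opNorm_slice_le hB₃R Q₂ _ _)
                (inv_nonneg.mpr hq2.le)
          _ = 1 := inv_mul_cancel₀ n2
      have hE₁ : embed d hB₁B R₁ = ((opNorm d Q₁ : ℝ) : ℂ) • embed d hB₁B QA := by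
        rw [hQAdef, embed_smul, smul_smul,
          mul_inv_cancel₀ (by exact_mod_cast n1), one_smul]
      have hE₂ : embed d hB₃B R₂ = ((opNorm d Q₂ : ℝ) : ℂ) • embed d hB₃B QC := by
        rw [hQCdef, embed_smul, smul_smul,
          mul_inv_cancel₀ (by exact_mod_cast n2), one_smul]
      have hXarg :
          Matrix.trace (gibbs Φ (Finset.Ico a₁ a₄) * embed d hB₁B R₁ * embed d hB₃B R₂)
            - Matrix.trace (gibbs Φ (Finset.Ico a₁ a₄) * embed d hB₁B R₁)
              * Matrix.trace (gibbs Φ (Finset.Ico a₁ a₄) * embed d hB₃B R₂)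
          = ((opNorm d Q₁ : ℝ) : ℂ) * ((opNorm d Q₂ : ℝ) : ℂ) *
              (Matrix.trace (gibbs Φ (Finset.Ico a₁ a₄) * embed d hB₁B QA * embed d hB₃B QC)
                - Matrix.trace (gibbs Φ (Finset.Ico a₁ a₄) * embed d hB₁B QA)
                  * Matrix.trace (gibbs Φ (Finset.Ico a₁ a₄) * embed d hB₃B QC)) := by
        rw [hE₁, hE₂]
        simp only [Matrix.mul_smul, Matrix.smul_mul, Matrix.trace_smul, smul_eq_mul]
        ring
      rw [hXarg, norm_mul, norm_mul,
        hcast1, hcast2]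
      refine mul_le_mul_of_nonneg_left ?_ (mul_nonneg hq1.le hq2.le)
      have hcov0 := hclu a₁ a₂ a₃ a₄ h₁₂ h₂₃ h₃₄ ℓ hB₂ QA QC hnormQA hnormQC
      unfold expec at hcov0
      rw [← mul_assoc] at hcov0
      exact hcov0
    · rw [Matrix.sub_apply, ptr_apply_of_ne hB _ hfg, ptr_product_bdiag hB _ _ hfg,
        sub_zero]
      simpa using hc0
  · have hcardn : Fintype.card (Cfg d (Finset.Ico a₀ a₅ \ Finset.Ico a₁ a₄))
        = d ^ ((Finset.Ico a₀ a₅ \ Finset.Ico a₁ a₄).card) := by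
      rw [Fintype.card_pi]
      simp [Finset.prod_const, Finset.card_univ]
    have hkle : 2 * (Finset.Ico a₀ a₅ \ Finset.Ico a₁ a₄).card ≤ 2 * n + 2 * m := by
      rw [Finset.card_sdiff_of_subset hB, Int.card_Ico, Int.card_Ico]
      omega
    have h2 : ((Fintype.card (Cfg d (Finset.Ico a₀ a₅ \ Finset.Ico a₁ a₄)) : ℝ)) ^ 2
        ≤ (d : ℝ) ^ (2 * n + 2 * m) := by
      rw [hcardn]
      push_cast
      rw [← pow_mul]
      refine pow_le_pow_right₀ hd1 ?_
      omega
    calc (Fintype.card (Cfg d (Finset.Ico a₀ a₅ \ Finset.Ico a₁ a₄)) : ℝ) ^ 2 *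
          (opNorm d Q₁ * opNorm d Q₂ * ε ℓ)
        ≤ (d : ℝ) ^ (2 * n + 2 * m) * (opNorm d Q₁ * opNorm d Q₂ * ε ℓ) :=
          mul_le_mul_of_nonneg_right h2 hc0
      _ = (d : ℝ) ^ (2 * n + 2 * m) * opNorm d Q₁ * opNorm d Q₂ * ε ℓ := by ring

end SpinChain
end
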